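/- arXiv:0910.3448 — 4 statements merged into one kernel-verified Lean document; each statement's English description precedes it below -/
import Mathlib

section
/- For any stationary sequence $(X_k)$ of centered square-integrable random variables adapted to a filtration $(\mathcal{F}_k)$, with $S_n = \sum_{i=0}^{n-1}X_i$, one has $\mathbb{E}\left[\max_{1\leq i\leq n} S_i^2\right] \leq 8n\,\mathbb{E}[X_0^2] + 16\sum_{k=2}^n \mathbb{E}\left|X_0\,\mathbb{E}(S_k - S_1 \mid \mathcal{F}_0)\right|$. -/
open MeasureTheory Filter

namespace Rio5

set_option linter.unusedSectionVars false

/-- Running maximum of `f 1, ..., f k` together with `0`. -/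
def runMax (f : ℕ → ℝ) : ℕ → ℝ
  | 0 => 0
  | k + 1 => max (runMax f k) (f (k + 1))

lemma runMax_nonneg (f : ℕ → ℝ) : ∀ k, 0 ≤ runMax f k
  | 0 => le_refl 0
  | k + 1 => le_trans (runMax_nonneg f k) (le_max_left _ _)

lemma le_runMax (f : ℕ → ℝ) (hf0 : f 0 = 0) : ∀ k, f k ≤ runMax f k
  | 0 => by simp [runMax, hf0]
  | k + 1 => le_max_right _ _

lemma runMax_succ_sub_nonneg (f : ℕ → ℝ) (j : ℕ) :
    0 ≤ runMax f (j + 1) - runMax f j := by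
  have : runMax f j ≤ runMax f (j + 1) := le_max_left _ _
  linarith

lemma runMax_succ_sub_le (f : ℕ → ℝ) (hf0 : f 0 = 0) (j : ℕ) :
    runMax f (j + 1) - runMax f j ≤ max (f (j + 1) - f j) 0 := by
  by_cases h : f (j + 1) ≤ runMax f j
  · have : runMax f (j + 1) = runMax f j := max_eq_left h
    rw [this]
    simp [le_max_iff]
  · push_neg at h
    have h1 : runMax f (j + 1) = f (j + 1) := max_eq_right h.le
    have h2 : f j ≤ runMax f j := le_runMax f hf0 j
    rw [h1]
    have : f (j + 1) - runMax f j ≤ f (j + 1) - f j := by linarith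
    exact this.trans (le_max_left _ _)

lemma runMax_mono (f : ℕ → ℝ) {k l : ℕ} (h : k ≤ l) : runMax f k ≤ runMax f l := by
  induction l with
  | zero => simp at h; simp [h]
  | succ l ih =>
      rcases Nat.le_succ_iff.mp h with h' | h'
      · exact (ih h').trans (le_max_left _ _)
      · subst h'; rfl

/-- The pathwise Doob-type inequality. -/
lemma runMax_sq_le (f : ℕ → ℝ) (n : ℕ) :
    (runMax f n) ^ 2 ≤ 4 * (f n) ^ 2
      - 4 * ∑ j ∈ Finset.range n, (runMax f (j + 1) - runMax f j) * (f n - f (j + 1)) := by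
  have htel : ∑ j ∈ Finset.range n, (runMax f (j + 1) - runMax f j) = runMax f n := by
    rw [Finset.sum_range_sub (runMax f) n]
    simp [runMax]
  have hterm : ∀ j, ((runMax f (j + 1)) ^ 2 - (runMax f j) ^ 2) / 2
      ≤ (runMax f (j + 1) - runMax f j) * f (j + 1) := by
    intro j
    by_cases h : f (j + 1) ≤ runMax f j
    · have : runMax f (j + 1) = runMax f j := max_eq_left h
      rw [this]; ring_nf; rfl
    · push_neg at h
      have h1 : runMax f (j + 1) = f (j + 1) := max_eq_right h.le
      nlinarith [sq_nonneg (runMax f (j + 1) - runMax f j)]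
  have hsum : ((runMax f n) ^ 2 - (runMax f 0) ^ 2) / 2
      ≤ ∑ j ∈ Finset.range n, (runMax f (j + 1) - runMax f j) * f (j + 1) := by
    have := Finset.sum_le_sum (f := fun j => ((runMax f (j + 1)) ^ 2 - (runMax f j) ^ 2) / 2)
      (g := fun j => (runMax f (j + 1) - runMax f j) * f (j + 1))
      (s := Finset.range n) (fun j _ => hterm j)
    calc ((runMax f n) ^ 2 - (runMax f 0) ^ 2) / 2
        = ∑ j ∈ Finset.range n, (((runMax f (j + 1)) ^ 2 - (runMax f j) ^ 2) / 2) := by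
          rw [← Finset.sum_div, Finset.sum_range_sub (fun k => (runMax f k) ^ 2) n]
      _ ≤ _ := this
  have h0 : runMax f 0 = 0 := rfl
  rw [h0] at hsum
  have hexpand : ∑ j ∈ Finset.range n, (runMax f (j + 1) - runMax f j) * (f n - f (j + 1))
      = (runMax f n) * f n
        - ∑ j ∈ Finset.range n, (runMax f (j + 1) - runMax f j) * f (j + 1) := by
    rw [← htel, Finset.sum_mul]
    rw [← Finset.sum_sub_distrib]
    congr 1
    ext j
    ring
  rw [hexpand]
  nlinarith [sq_nonneg (2 * f n - runMax f n), hsum]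


variable {Ω : Type*} [m0 : MeasurableSpace Ω] {μ : Measure Ω} [IsProbabilityMeasure μ]

lemma integrable_mul_of_L2 {f g : Ω → ℝ} (hf : MemLp f 2 μ) (hg : MemLp g 2 μ) :
    Integrable (fun ω => f ω * g ω) μ := by
  refine Integrable.mono' (hf.integrable_sq.add hg.integrable_sq)
    (hf.aestronglyMeasurable.mul hg.aestronglyMeasurable) ?_
  filter_upwards with ω
  have h := sq_nonneg (|f ω| - |g ω|)
  have : ‖f ω * g ω‖ = |f ω| * |g ω| := by
    simp [Real.norm_eq_abs, abs_mul]
  rw [this]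
  have : ((fun x => f x ^ 2) + fun x => g x ^ 2) ω = f ω ^ 2 + g ω ^ 2 := rfl
  rw [this]
  nlinarith [sq_abs (f ω), sq_abs (g ω)]

lemma integral_comp_iterate {T : Ω → Ω} (hT : MeasurePreserving T μ μ) {g : Ω → ℝ}
    (hg : AEStronglyMeasurable g μ) (j : ℕ) : ∫ ω, g (T^[j] ω) ∂μ = ∫ ω, g ω ∂μ := by
  have h := (hT.iterate j)
  rw [← integral_map h.measurable.aemeasurable (by rwa [h.map_eq])]
  rw [h.map_eq]

lemma setIntegral_comp_iterate {T : Ω → Ω} (hT : MeasurePreserving T μ μ) {g : Ω → ℝ}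
    (hg : AEStronglyMeasurable g μ) (j : ℕ) {B : Set Ω} (hB : MeasurableSet B) :
    ∫ ω in T^[j] ⁻¹' B, g (T^[j] ω) ∂μ = ∫ ω in B, g ω ∂μ := by
  rw [← integral_indicator ((hT.iterate j).measurable hB), ← integral_indicator hB]
  have : (fun ω => Set.indicator (T^[j] ⁻¹' B) (fun ω' => g (T^[j] ω')) ω)
      = fun ω => Set.indicator B g (T^[j] ω) := by
    ext ω
    exact Set.indicator_comp_right (T^[j]) (s := B) (g := g) (x := ω)
  rw [this]
  exact integral_comp_iterate hT (hg.indicator hB) j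


lemma comap_iterate_le {T : Ω → Ω} (hTmeas : Measurable T) {F0 : MeasurableSpace Ω}
    (hF0 : F0 ≤ m0) (j : ℕ) : F0.comap T^[j] ≤ m0 := by
  intro s hs
  obtain ⟨B, hB, rfl⟩ := hs
  exact (hTmeas.iterate j) (hF0 _ hB)

lemma measurable_iterate_comap {T : Ω → Ω} {F0 : MeasurableSpace Ω} (j : ℕ) :
    @Measurable Ω Ω (F0.comap T^[j]) F0 (T^[j]) := by
  intro s hs
  exact ⟨s, hs, rfl⟩

/-- Conditional expectation commutes with composition by an iterate of a
measure preserving map. -/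
lemma condexp_comp_iterate {T : Ω → Ω} (hTmeas : Measurable T)
    (hT : MeasurePreserving T μ μ) {F0 : MeasurableSpace Ω} (hF0 : F0 ≤ m0)
    {g : Ω → ℝ} (hgm : StronglyMeasurable[m0] g) (hg : Integrable g μ) (j : ℕ) :
    (fun ω => (μ[g|F0]) (T^[j] ω)) =ᵐ[μ] μ[(fun ω => g (T^[j] ω)) | F0.comap T^[j]] := by
  letI : MeasurableSpace Ω := m0
  have hm : F0.comap T^[j] ≤ m0 := comap_iterate_le (m0 := m0) hTmeas hF0 j
  haveI : SigmaFinite (μ.trim hm) := by infer_instance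
  have hcem : StronglyMeasurable[m0] (μ[g|F0]) := stronglyMeasurable_condExp.mono hF0
  refine ae_eq_condExp_of_forall_setIntegral_eq hm ?_ ?_ ?_ ?_
  · have := (memLp_one_iff_integrable.mpr hg).comp_measurePreserving (hT.iterate j)
    exact memLp_one_iff_integrable.mp this
  · intro s _ _
    refine Integrable.integrableOn ?_
    have := (memLp_one_iff_integrable.mpr (integrable_condExp (m := F0) (f := g)))
      |>.comp_measurePreserving (hT.iterate j)
    exact memLp_one_iff_integrable.mp this
  · intro s hs _
    obtain ⟨B, hB, rfl⟩ := hs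
    rw [setIntegral_comp_iterate hT hcem.aestronglyMeasurable j (hF0 _ hB)]
    rw [setIntegral_condExp hF0 hg hB]
    exact (setIntegral_comp_iterate hT hgm.aestronglyMeasurable j (hF0 _ hB)).symm
  · exact StronglyMeasurable.aestronglyMeasurable
      (stronglyMeasurable_condExp.comp_measurable (measurable_iterate_comap (m0 := m0) j))

/-- Tower property for the integral of a product. -/
lemma integral_mul_condexp {m : MeasurableSpace Ω} (hm : m ≤ m0) {Z Y : Ω → ℝ}
    (hZ : StronglyMeasurable[m] Z) (hZ2 : MemLp Z 2 μ) (hY2 : MemLp Y 2 μ) :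
    ∫ ω, Z ω * Y ω ∂μ = ∫ ω, Z ω * (μ[Y|m]) ω ∂μ := by
  letI : MeasurableSpace Ω := m0
  haveI : SigmaFinite (μ.trim hm) := by infer_instance
  have hZY : Integrable (fun ω => Z ω * Y ω) μ := integrable_mul_of_L2 hZ2 hY2
  have hZY' : Integrable (Z * Y) μ := hZY
  have h := condExp_mul_of_stronglyMeasurable_left (μ := μ) hZ hZY' (hY2.integrable one_le_two)
  calc ∫ ω, Z ω * Y ω ∂μ = ∫ ω, (μ[Z * Y|m]) ω ∂μ := (integral_condExp hm).symm
    _ = ∫ ω, (Z * μ[Y|m]) ω ∂μ := integral_congr_ae h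
    _ = ∫ ω, Z ω * (μ[Y|m]) ω ∂μ := rfl

/-- The multiplied function `Z * μ[Y|m]` is integrable. -/
lemma integrable_mul_condexp {m : MeasurableSpace Ω} (hm : m ≤ m0) {Z Y : Ω → ℝ}
    (hZ : StronglyMeasurable[m] Z) (hZ2 : MemLp Z 2 μ) (hY2 : MemLp Y 2 μ) :
    Integrable (fun ω => Z ω * (μ[Y|m]) ω) μ := by
  letI : MeasurableSpace Ω := m0
  haveI : SigmaFinite (μ.trim hm) := by infer_instance
  have hZY' : Integrable (Z * Y) μ := integrable_mul_of_L2 hZ2 hY2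
  have h := condExp_mul_of_stronglyMeasurable_left (μ := μ) hZ hZY' (hY2.integrable one_le_two)
  exact (integrable_condExp.congr h :)


lemma negpart_eq (z : ℝ) : max (-z) 0 = (|z| - z) / 2 := by
  rcases le_total 0 z with h | h
  · rw [abs_of_nonneg h, max_eq_right (by linarith : -z ≤ 0)]
    ring
  · rw [abs_of_nonpos h, max_eq_left (by linarith : (0:ℝ) ≤ -z)]
    ring

lemma key_pointwise {dp dq x v : ℝ} (hdp0 : 0 ≤ dp) (hdp : dp ≤ max x 0)
    (hdq0 : 0 ≤ dq) (hdq : dq ≤ max (-x) 0) :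
    (dq - dp) * v ≤ max (-(x * v)) 0 := by
  rw [negpart_eq]
  rcases le_total 0 v with hv | hv <;> rcases le_total 0 x with hx | hx
  · rw [max_eq_right (by linarith : -x ≤ 0)] at hdq
    rw [abs_of_nonneg (mul_nonneg hx hv)]
    nlinarith
  · rw [max_eq_right (by linarith : x ≤ (0:ℝ))] at hdp
    rw [max_eq_left (by linarith : (0:ℝ) ≤ -x)] at hdq
    rw [abs_of_nonpos (mul_nonpos_of_nonpos_of_nonneg hx hv)]
    nlinarith
  · rw [max_eq_right (by linarith : -x ≤ (0:ℝ))] at hdq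
    rw [max_eq_left (by linarith : (0:ℝ) ≤ x)] at hdp
    rw [abs_of_nonpos (mul_nonpos_of_nonneg_of_nonpos hx hv)]
    nlinarith
  · rw [max_eq_right (by linarith : x ≤ (0:ℝ))] at hdp
    rw [max_eq_left (by linarith : (0:ℝ) ≤ -x)] at hdq
    rw [abs_of_nonneg (by nlinarith : (0:ℝ) ≤ x * v)]
    nlinarith

/-- Running max as a function on `Ω`. -/
def MF (S : ℕ → Ω → ℝ) (l : ℕ) (ω : Ω) : ℝ := runMax (fun k => S k ω) l

lemma MF_zero (S : ℕ → Ω → ℝ) : MF S 0 = fun _ => 0 := rfl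

lemma MF_succ (S : ℕ → Ω → ℝ) (l : ℕ) :
    MF S (l + 1) = fun ω => max (MF S l ω) (S (l + 1) ω) := rfl

lemma measurable_MF {m' : MeasurableSpace Ω} {S : ℕ → Ω → ℝ} :
    ∀ (l : ℕ), (∀ k, k ≤ l → Measurable[m'] (S k)) → Measurable[m'] (MF S l)
  | 0, _ => measurable_const
  | l + 1, h => by
      rw [MF_succ]
      exact Measurable.max (measurable_MF l (fun k hk => h k (hk.trans (Nat.le_succ l))))
        (h (l + 1) le_rfl)

lemma memℒp_MF {S : ℕ → Ω → ℝ} (hS : ∀ k, MemLp (S k) 2 μ) : ∀ l, MemLp (MF S l) 2 μ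
  | 0 => by
      rw [MF_zero]
      exact memLp_const 0
  | l + 1 => by
      rw [MF_succ]
      have h := (memℒp_MF hS l).sup (hS (l + 1))
      exact h.ae_eq (ae_of_all _ (fun ω => by simp [Pi.sup_apply, max_def]))

lemma sum_range_sub_eq_sum_Icc (c : ℕ → ℝ) (m : ℕ) :
    ∑ j ∈ Finset.range m, c (m - j) = ∑ k ∈ Finset.Icc 1 m, c k := by
  have h1 : ∑ j ∈ Finset.range m, c (m - j) = ∑ j ∈ Finset.range m, c (j + 1) := by
    rw [← Finset.sum_range_reflect (fun j => c (j + 1)) m]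
    refine Finset.sum_congr rfl (fun j hj => ?_)
    have := Finset.mem_range.mp hj
    congr 1
    omega
  rw [h1, ← Finset.Ico_add_one_right_eq_Icc, Finset.sum_Ico_eq_sum_range]
  refine Finset.sum_congr (by norm_num) (fun j _ => by rw [add_comm])

end Rio5

open Rio5 in
/-- Rio's maximal inequality
`E[max_{1≤i≤n} S_i²] ≤ 8 n E[X_0²] + 16 ∑_{k=2}^n E|X_0 E(S_k - S_1 | F_0)|`. -/
theorem stmt5
    {Ω : Type*} [m0 : MeasurableSpace Ω] (μ : Measure Ω) [IsProbabilityMeasure μ]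
    (T : Ω → Ω) (hTmeas : Measurable T) (hT : MeasurePreserving T μ μ)
    (F0 : MeasurableSpace Ω) (hF0 : F0 ≤ m0) (hF0T : F0 ≤ F0.comap T)
    (X0 : Ω → ℝ) (hX0meas : StronglyMeasurable[F0] X0)
    (hX0L2 : MemLp X0 2 μ) (hX0cent : ∫ ω, X0 ω ∂μ = 0)
    (X : ℕ → Ω → ℝ) (hX : ∀ k, X k = X0 ∘ T^[k])
    (S : ℕ → Ω → ℝ) (hS : ∀ n, S n = fun ω => ∑ i ∈ Finset.range n, X i ω)
    (n : ℕ) (hn : 1 ≤ n) :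
    ∫ ω, (⨆ i ∈ Finset.Icc 1 n, (S i ω) ^ 2) ∂μ
      ≤ 8 * n * ∫ ω, (X0 ω) ^ 2 ∂μ
        + 16 * ∑ k ∈ Finset.Icc 2 n,
            ∫ ω, |X0 ω * (μ[fun ω' => S k ω' - S 1 ω' | F0]) ω| ∂μ := by
  letI : MeasurableSpace Ω := m0
  -- basic pointwise descriptions
  have hXf : ∀ i, X i = fun ω => X0 (T^[i] ω) := fun i => by rw [hX i]; rfl
  have hS0 : ∀ ω, S 0 ω = 0 := fun ω => by rw [hS 0]; simp
  have hSsucc : ∀ a ω, S (a + 1) ω = S a ω + X a ω := fun a ω => by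
    rw [hS (a + 1), hS a]; exact Finset.sum_range_succ _ a
  -- measurability w.r.t. the ambient σ-algebra
  have hTj : ∀ j, Measurable (T^[j]) := fun j => hTmeas.iterate j
  have hX0sm : StronglyMeasurable[m0] X0 := hX0meas.mono hF0
  have hXsm : ∀ i, StronglyMeasurable[m0] (X i) := fun i => by
    rw [hXf i]; exact hX0sm.comp_measurable (hTj i)
  have hSsm : ∀ a, StronglyMeasurable[m0] (S a) := fun a => by
    rw [hS a]
    exact (Finset.measurable_sum _ (fun i _ => (hXsm i).measurable)).stronglyMeasurable
  -- L² bounds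
  have hX2 : ∀ i, MemLp (X i) 2 μ := fun i => by
    rw [hXf i]; exact hX0L2.comp_measurePreserving (hT.iterate i)
  have hS2 : ∀ a, MemLp (S a) 2 μ := fun a => by
    rw [hS a]; exact memLp_finsetSum (Finset.range a) (fun i _ => hX2 i)
  -- the filtration
  have hFle : ∀ j, F0.comap T^[j] ≤ m0 := fun j => comap_iterate_le hTmeas hF0 j
  have hF0le_iter : ∀ j, F0 ≤ F0.comap T^[j] := by
    intro j
    induction j with
    | zero => rw [Function.iterate_zero, MeasurableSpace.comap_id]
    | succ j ih =>
        refine ih.trans ?_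
        have h1 : (F0.comap T^[j]) ≤ (F0.comap T).comap T^[j] :=
          MeasurableSpace.comap_mono hF0T
        refine h1.trans (le_of_eq ?_)
        rw [MeasurableSpace.comap_comp, ← Function.iterate_succ']
  have hFmono : ∀ i j, i ≤ j → F0.comap T^[i] ≤ F0.comap T^[j] := by
    intro i j hij
    have h1 : F0.comap T^[i] ≤ (F0.comap T^[j - i]).comap T^[i] :=
      MeasurableSpace.comap_mono (hF0le_iter (j - i))
    refine h1.trans (le_of_eq ?_)
    rw [MeasurableSpace.comap_comp, ← Function.iterate_add, Nat.sub_add_cancel hij]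
  -- measurability w.r.t. the filtration
  have hXmF : ∀ i j, i ≤ j → Measurable[F0.comap T^[j]] (X i) := fun i j hij => by
    rw [hXf i]
    have h1 : @Measurable Ω ℝ (F0.comap T^[i]) _ (fun ω => X0 (T^[i] ω)) :=
      (hX0meas.measurable).comp (measurable_iterate_comap (m0 := m0) i)
    exact h1.mono (hFmono i j hij) le_rfl
  have hSmF : ∀ a j, a ≤ j + 1 → Measurable[F0.comap T^[j]] (S a) := fun a j ha => by
    rw [hS a]
    exact Finset.measurable_sum _
      (fun i hi => hXmF i j (by have := Finset.mem_range.mp hi; omega))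
  -- shifted sums
  have hshiftS : ∀ a j ω, S a (T^[j] ω) = S (a + j) ω - S j ω := by
    intro a j ω
    rw [hS a, hS (a + j), hS j]
    simp only
    rw [eq_sub_iff_add_eq, ← Finset.sum_range_add_sum_Ico (fun i => X i ω) (le_add_self : j ≤ a + j)]
    rw [add_comm]
    congr 1
    rw [Finset.sum_Ico_eq_sum_range]
    simp only [add_tsub_cancel_right]
    refine Finset.sum_congr rfl (fun i _ => ?_)
    rw [hXf (j + i), hXf i]
    simp only
    rw [← Function.iterate_add_apply, add_comm j i]
  -- the two running maxima
  set negS : ℕ → Ω → ℝ := fun k ω => -S k ω with hnegS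
  have hnegS0 : ∀ ω, negS 0 ω = 0 := fun ω => by rw [hnegS]; simp [hS0 ω]
  have hnegS2 : ∀ a, MemLp (negS a) 2 μ := fun a => (hS2 a).neg
  have hnegSmF : ∀ a j, a ≤ j + 1 → Measurable[F0.comap T^[j]] (negS a) :=
    fun a j ha => (hSmF a j ha).neg
  have hMp2 : ∀ l, MemLp (MF S l) 2 μ := memℒp_MF hS2
  have hMq2 : ∀ l, MemLp (MF negS l) 2 μ := memℒp_MF hnegS2
  have hMpF : ∀ l j, l ≤ j + 1 → Measurable[F0.comap T^[j]] (MF S l) :=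
    fun l j hl => measurable_MF l (fun k hk => hSmF k j (hk.trans hl))
  have hMqF : ∀ l j, l ≤ j + 1 → Measurable[F0.comap T^[j]] (MF negS l) :=
    fun l j hl => measurable_MF l (fun k hk => hnegSmF k j (hk.trans hl))
  have hMpm0 : ∀ l, StronglyMeasurable[m0] (MF S l) := fun l =>
    (measurable_MF l (fun k _ => (hSsm k).measurable)).stronglyMeasurable
  have hMqm0 : ∀ l, StronglyMeasurable[m0] (MF negS l) := fun l =>
    (measurable_MF l (fun k _ => (hSsm k).measurable.neg)).stronglyMeasurable
  -- increments of the running maxima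
  set Dp : ℕ → Ω → ℝ := fun j ω => MF S (j + 1) ω - MF S j ω with hDp
  set Dq : ℕ → Ω → ℝ := fun j ω => MF negS (j + 1) ω - MF negS j ω with hDq
  have hDp2 : ∀ j, MemLp (Dp j) 2 μ := fun j => (hMp2 (j + 1)).sub (hMp2 j)
  have hDq2 : ∀ j, MemLp (Dq j) 2 μ := fun j => (hMq2 (j + 1)).sub (hMq2 j)
  have hDpF : ∀ j, Measurable[F0.comap T^[j]] (Dp j) := fun j =>
    (hMpF (j + 1) j le_rfl).sub (hMpF j j (Nat.le_succ j))
  have hDqF : ∀ j, Measurable[F0.comap T^[j]] (Dq j) := fun j =>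
    (hMqF (j + 1) j le_rfl).sub (hMqF j j (Nat.le_succ j))
  have hDp0 : ∀ j ω, 0 ≤ Dp j ω := fun j ω => by
    rw [hDp]; simp only; rw [sub_nonneg]; exact runMax_mono _ (Nat.le_succ j)
  have hDq0 : ∀ j ω, 0 ≤ Dq j ω := fun j ω => by
    rw [hDq]; simp only; rw [sub_nonneg]; exact runMax_mono _ (Nat.le_succ j)
  have hDple : ∀ j ω, Dp j ω ≤ max (X j ω) 0 := fun j ω => by
    rw [hDp]; simp only
    have h := runMax_succ_sub_le (fun k => S k ω) (hS0 ω) j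
    have h2 : S (j + 1) ω - S j ω = X j ω := by rw [hSsucc j ω]; ring
    rw [h2] at h
    exact h
  have hDqle : ∀ j ω, Dq j ω ≤ max (-X j ω) 0 := fun j ω => by
    rw [hDq]; simp only
    have h := runMax_succ_sub_le (fun k => negS k ω) (hnegS0 ω) j
    have h2 : negS (j + 1) ω - negS j ω = -X j ω := by
      rw [hnegS]; simp only; rw [hSsucc j ω]; ring
    rw [h2] at h
    exact h
  -- pointwise bound for the supremum
  have hsup : ∀ ω, (⨆ i ∈ Finset.Icc 1 n, (S i ω) ^ 2)
      ≤ (MF S n ω) ^ 2 + (MF negS n ω) ^ 2 := by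
    intro ω
    have ha : 0 ≤ MF S n ω := runMax_nonneg _ n
    have hb : 0 ≤ MF negS n ω := runMax_nonneg _ n
    refine Real.iSup_le (fun i => Real.iSup_le (fun hi => ?_) (by positivity)) (by positivity)
    have h1 : S i ω ≤ MF S n ω :=
      (le_runMax (fun k => S k ω) (hS0 ω) i).trans
        (runMax_mono _ (Finset.mem_Icc.mp hi).2)
    have h2 : -S i ω ≤ MF negS n ω :=
      (le_runMax (fun k => negS k ω) (hnegS0 ω) i).trans
        (runMax_mono _ (Finset.mem_Icc.mp hi).2)
    rcases le_total 0 (S i ω) with hs | hs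
    · have := pow_le_pow_left₀ hs h1 2
      nlinarith [sq_nonneg (MF negS n ω)]
    · have h3 : (S i ω) ^ 2 = (-S i ω) ^ 2 := by ring
      have := pow_le_pow_left₀ (neg_nonneg.mpr hs) h2 2
      nlinarith [sq_nonneg (MF S n ω)]
  -- integrability of the basic squares and products
  have hIsq_p : Integrable (fun ω => (MF S n ω) ^ 2) μ := (hMp2 n).integrable_sq
  have hIsq_q : Integrable (fun ω => (MF negS n ω) ^ 2) μ := (hMq2 n).integrable_sq
  have hIsq_S : Integrable (fun ω => (S n ω) ^ 2) μ := (hS2 n).integrable_sq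
  have hdiff2 : ∀ a b, MemLp (fun ω => S a ω - S b ω) 2 μ := fun a b => (hS2 a).sub (hS2 b)
  have hprod_p : ∀ j, Integrable (fun ω => Dp j ω * (S n ω - S (j + 1) ω)) μ :=
    fun j => integrable_mul_of_L2 (hDp2 j) (hdiff2 n (j + 1))
  have hprod_q : ∀ j, Integrable (fun ω => Dq j ω * (S (j + 1) ω - S n ω)) μ :=
    fun j => integrable_mul_of_L2 (hDq2 j) (hdiff2 (j + 1) n)
  -- step 1 : the integral of the sup is dominated
  have hstep1 : ∫ ω, (⨆ i ∈ Finset.Icc 1 n, (S i ω) ^ 2) ∂μ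
      ≤ (∫ ω, (MF S n ω) ^ 2 ∂μ) + ∫ ω, (MF negS n ω) ^ 2 ∂μ := by
    have h := integral_mono_of_nonneg
      (f := fun ω => ⨆ i ∈ Finset.Icc 1 n, (S i ω) ^ 2)
      (g := fun ω => (MF S n ω) ^ 2 + (MF negS n ω) ^ 2)
      (ae_of_all _ fun ω => Real.iSup_nonneg (fun i => Real.iSup_nonneg (fun _ => sq_nonneg _)))
      (hIsq_p.add hIsq_q) (ae_of_all _ hsup)
    rwa [integral_add hIsq_p hIsq_q] at h
  -- step 2 : integrated pathwise inequalities
  have hdet_p : ∫ ω, (MF S n ω) ^ 2 ∂μ ≤ 4 * ∫ ω, (S n ω) ^ 2 ∂μ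
      - 4 * ∑ j ∈ Finset.range n, ∫ ω, Dp j ω * (S n ω - S (j + 1) ω) ∂μ := by
    have hptwise : ∀ ω, (MF S n ω) ^ 2 ≤ 4 * (S n ω) ^ 2
        - 4 * ∑ j ∈ Finset.range n, Dp j ω * (S n ω - S (j + 1) ω) := fun ω =>
      runMax_sq_le (fun k => S k ω) n
    have hsum_int : Integrable
        (fun ω => ∑ j ∈ Finset.range n, Dp j ω * (S n ω - S (j + 1) ω)) μ :=
      integrable_finset_sum _ (fun j _ => hprod_p j)
    have h1 : ∫ ω, (MF S n ω) ^ 2 ∂μ ≤ ∫ ω, (4 * (S n ω) ^ 2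
        - 4 * ∑ j ∈ Finset.range n, Dp j ω * (S n ω - S (j + 1) ω)) ∂μ :=
      integral_mono hIsq_p (by exact (hIsq_S.const_mul 4).sub (hsum_int.const_mul 4)) hptwise
    have heq : ∫ ω, (4 * (S n ω) ^ 2
        - 4 * ∑ j ∈ Finset.range n, Dp j ω * (S n ω - S (j + 1) ω)) ∂μ
        = 4 * ∫ ω, (S n ω) ^ 2 ∂μ
          - 4 * ∑ j ∈ Finset.range n, ∫ ω, Dp j ω * (S n ω - S (j + 1) ω) ∂μ := by
      rw [integral_sub (f := fun ω => 4 * (S n ω) ^ 2)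
        (g := fun ω => 4 * ∑ j ∈ Finset.range n, Dp j ω * (S n ω - S (j + 1) ω))
        (by exact hIsq_S.const_mul 4) (by exact hsum_int.const_mul 4),
        integral_const_mul, integral_const_mul,
        integral_finset_sum _ (fun j _ => hprod_p j)]
    rw [heq] at h1
    exact h1
  have hdet_q : ∫ ω, (MF negS n ω) ^ 2 ∂μ ≤ 4 * ∫ ω, (S n ω) ^ 2 ∂μ
      - 4 * ∑ j ∈ Finset.range n, ∫ ω, Dq j ω * (S (j + 1) ω - S n ω) ∂μ := by
    have hptwise : ∀ ω, (MF negS n ω) ^ 2 ≤ 4 * (S n ω) ^ 2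
        - 4 * ∑ j ∈ Finset.range n, Dq j ω * (S (j + 1) ω - S n ω) := by
      intro ω
      have h := runMax_sq_le (fun k => negS k ω) n
      have e1 : (negS n ω) ^ 2 = (S n ω) ^ 2 := by rw [hnegS]; ring
      have e2 : ∑ j ∈ Finset.range n,
            (runMax (fun k => negS k ω) (j + 1) - runMax (fun k => negS k ω) j)
              * (negS n ω - negS (j + 1) ω)
          = ∑ j ∈ Finset.range n, Dq j ω * (S (j + 1) ω - S n ω) := by
        refine Finset.sum_congr rfl (fun j _ => ?_)
        have e3 : negS n ω - negS (j + 1) ω = S (j + 1) ω - S n ω := by rw [hnegS]; ring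
        rw [e3]
        rfl
      rw [e1, e2] at h
      exact h
    have hsum_int : Integrable
        (fun ω => ∑ j ∈ Finset.range n, Dq j ω * (S (j + 1) ω - S n ω)) μ :=
      integrable_finset_sum _ (fun j _ => hprod_q j)
    have h1 : ∫ ω, (MF negS n ω) ^ 2 ∂μ ≤ ∫ ω, (4 * (S n ω) ^ 2
        - 4 * ∑ j ∈ Finset.range n, Dq j ω * (S (j + 1) ω - S n ω)) ∂μ :=
      integral_mono hIsq_q (by exact (hIsq_S.const_mul 4).sub (hsum_int.const_mul 4)) hptwise
    have heq : ∫ ω, (4 * (S n ω) ^ 2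
        - 4 * ∑ j ∈ Finset.range n, Dq j ω * (S (j + 1) ω - S n ω)) ∂μ
        = 4 * ∫ ω, (S n ω) ^ 2 ∂μ
          - 4 * ∑ j ∈ Finset.range n, ∫ ω, Dq j ω * (S (j + 1) ω - S n ω) ∂μ := by
      rw [integral_sub (f := fun ω => 4 * (S n ω) ^ 2)
        (g := fun ω => 4 * ∑ j ∈ Finset.range n, Dq j ω * (S (j + 1) ω - S n ω))
        (by exact hIsq_S.const_mul 4) (by exact hsum_int.const_mul 4),
        integral_const_mul, integral_const_mul,
        integral_finset_sum _ (fun j _ => hprod_q j)]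
    rw [heq] at h1
    exact h1
  -- step 3 : the key bound for each increment term, via conditioning and stationarity
  have hkey : ∀ j, j < n →
      (- ∫ ω, Dp j ω * (S n ω - S (j + 1) ω) ∂μ)
        - ∫ ω, Dq j ω * (S (j + 1) ω - S n ω) ∂μ
      ≤ ∫ ω, max (-(X0 ω * (μ[fun ω' => S (n - j) ω' - S 1 ω' | F0]) ω)) 0 ∂μ := by
    intro j hj
    have hkj : (n - j) + j = n := by omega
    have hg2 : MemLp (fun ω' => S (n - j) ω' - S 1 ω') 2 μ := hdiff2 (n - j) 1
    have hgsm : StronglyMeasurable[m0] (fun ω' => S (n - j) ω' - S 1 ω') :=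
      (hSsm (n - j)).sub (hSsm 1)
    set ψ : Ω → ℝ := μ[fun ω' => S (n - j) ω' - S 1 ω' | F0] with hψ
    have hψsm : StronglyMeasurable[m0] ψ := stronglyMeasurable_condExp.mono hF0
    have hYeq : ∀ ω, S (n - j) (T^[j] ω) - S 1 (T^[j] ω) = S n ω - S (j + 1) ω := by
      intro ω
      rw [hshiftS (n - j) j ω, hshiftS 1 j ω, hkj]
      have h1j : 1 + j = j + 1 := by omega
      rw [h1j]
      ring
    have hce : (fun ω => ψ (T^[j] ω)) =ᵐ[μ]
        μ[(fun ω => S (n - j) (T^[j] ω) - S 1 (T^[j] ω)) | F0.comap T^[j]] := by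
      have h := condexp_comp_iterate (μ := μ) hTmeas hT hF0 hgsm
        (hg2.integrable one_le_two) j
      exact h
    have hY2 : MemLp (fun ω => S (n - j) (T^[j] ω) - S 1 (T^[j] ω)) 2 μ := by
      have h := hg2.comp_measurePreserving (hT.iterate j)
      exact h
    have htp : ∫ ω, Dp j ω * (S n ω - S (j + 1) ω) ∂μ = ∫ ω, Dp j ω * ψ (T^[j] ω) ∂μ := by
      have h1 : ∫ ω, Dp j ω * (S n ω - S (j + 1) ω) ∂μ
          = ∫ ω, Dp j ω * (S (n - j) (T^[j] ω) - S 1 (T^[j] ω)) ∂μ :=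
        integral_congr_ae (ae_of_all _ fun ω => by
          show Dp j ω * (S n ω - S (j + 1) ω)
            = Dp j ω * (S (n - j) (T^[j] ω) - S 1 (T^[j] ω))
          rw [hYeq ω])
      rw [h1, integral_mul_condexp (μ := μ) (hFle j) ((hDpF j).stronglyMeasurable)
        (hDp2 j) hY2]
      refine integral_congr_ae ?_
      filter_upwards [hce] with ω hω
      rw [← hω]
    have htq : ∫ ω, Dq j ω * (S (j + 1) ω - S n ω) ∂μ
        = - ∫ ω, Dq j ω * ψ (T^[j] ω) ∂μ := by
      have h1 : ∫ ω, Dq j ω * (S (j + 1) ω - S n ω) ∂μ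
          = ∫ ω, -(Dq j ω * (S (n - j) (T^[j] ω) - S 1 (T^[j] ω))) ∂μ :=
        integral_congr_ae (ae_of_all _ fun ω => by
          show Dq j ω * (S (j + 1) ω - S n ω)
            = -(Dq j ω * (S (n - j) (T^[j] ω) - S 1 (T^[j] ω)))
          rw [hYeq ω]; ring)
      rw [h1, integral_neg, integral_mul_condexp (μ := μ) (hFle j)
        ((hDqF j).stronglyMeasurable) (hDq2 j) hY2]
      congr 1
      refine integral_congr_ae ?_
      filter_upwards [hce] with ω hω
      rw [← hω]
    have hIDpW : Integrable (fun ω => Dp j ω * ψ (T^[j] ω)) μ := by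
      have h := integrable_mul_condexp (μ := μ) (hFle j) ((hDpF j).stronglyMeasurable)
        (hDp2 j) hY2
      refine h.congr ?_
      filter_upwards [hce] with ω hω
      rw [← hω]
    have hIDqW : Integrable (fun ω => Dq j ω * ψ (T^[j] ω)) μ := by
      have h := integrable_mul_condexp (μ := μ) (hFle j) ((hDqF j).stronglyMeasurable)
        (hDq2 j) hY2
      refine h.congr ?_
      filter_upwards [hce] with ω hω
      rw [← hω]
    have hIXW : Integrable (fun ω => X j ω * ψ (T^[j] ω)) μ := by
      have h := integrable_mul_condexp (μ := μ) (hFle j)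
        ((hXmF j j le_rfl).stronglyMeasurable) (hX2 j) hY2
      refine h.congr ?_
      filter_upwards [hce] with ω hω
      rw [← hω]
    have hIXWneg : Integrable (fun ω => max (-(X j ω * ψ (T^[j] ω))) 0) μ := hIXW.neg_part
    have hptw : ∀ ω, Dq j ω * ψ (T^[j] ω) - Dp j ω * ψ (T^[j] ω)
        ≤ max (-(X j ω * ψ (T^[j] ω))) 0 := fun ω => by
      rw [← sub_mul]
      exact key_pointwise (hDp0 j ω) (hDple j ω) (hDq0 j ω) (hDqle j ω)
    have hcomb : ∫ ω, (Dq j ω * ψ (T^[j] ω) - Dp j ω * ψ (T^[j] ω)) ∂μ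
        ≤ ∫ ω, max (-(X j ω * ψ (T^[j] ω))) 0 ∂μ :=
      integral_mono (by exact hIDqW.sub hIDpW) hIXWneg hptw
    have hcomb2 : (∫ ω, Dq j ω * ψ (T^[j] ω) ∂μ) - ∫ ω, Dp j ω * ψ (T^[j] ω) ∂μ
        ≤ ∫ ω, max (-(X j ω * ψ (T^[j] ω))) 0 ∂μ := by
      rw [← integral_sub hIDqW hIDpW]
      exact hcomb
    have hshift_final : ∫ ω, max (-(X j ω * ψ (T^[j] ω))) 0 ∂μ
        = ∫ ω, max (-(X0 ω * ψ ω)) 0 ∂μ := by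
      have hpt : ∀ ω, max (-(X j ω * ψ (T^[j] ω))) 0
          = (fun ω' => max (-(X0 ω' * ψ ω')) 0) (T^[j] ω) := fun ω => by
        simp only [hXf j]
      rw [integral_congr_ae (ae_of_all _ hpt)]
      exact integral_comp_iterate hT
        (((hX0sm.measurable.mul hψsm.measurable).neg.max
          measurable_const).stronglyMeasurable.aestronglyMeasurable) j
    calc (- ∫ ω, Dp j ω * (S n ω - S (j + 1) ω) ∂μ)
          - ∫ ω, Dq j ω * (S (j + 1) ω - S n ω) ∂μ
        = (∫ ω, Dq j ω * ψ (T^[j] ω) ∂μ) - ∫ ω, Dp j ω * ψ (T^[j] ω) ∂μ := by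
          rw [htp, htq]; ring
      _ ≤ ∫ ω, max (-(X j ω * ψ (T^[j] ω))) 0 ∂μ := hcomb2
      _ = ∫ ω, max (-(X0 ω * ψ ω)) 0 ∂μ := hshift_final
  -- step 4 : quantities attached to each k
  have hψ2 : ∀ k, MemLp (fun ω' => S k ω' - S 1 ω') 2 μ := fun k => hdiff2 k 1
  have hIXψ : ∀ k, Integrable
      (fun ω => X0 ω * (μ[fun ω' => S k ω' - S 1 ω' | F0]) ω) μ :=
    fun k => integrable_mul_condexp (μ := μ) hF0 hX0meas hX0L2 (hψ2 k)
  have habs_int : ∀ k, Integrable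
      (fun ω => |X0 ω * (μ[fun ω' => S k ω' - S 1 ω' | F0]) ω|) μ :=
    fun k => (hIXψ k).abs
  have hB : ∀ k, ∫ ω, X0 ω * (μ[fun ω' => S k ω' - S 1 ω' | F0]) ω ∂μ
      = ∫ ω, X0 ω * (S k ω - S 1 ω) ∂μ :=
    fun k => (integral_mul_condexp (μ := μ) hF0 hX0meas hX0L2 (hψ2 k)).symm
  have hnegp : ∀ k, ∫ ω, max (-(X0 ω * (μ[fun ω' => S k ω' - S 1 ω' | F0]) ω)) 0 ∂μ
      = ((∫ ω, |X0 ω * (μ[fun ω' => S k ω' - S 1 ω' | F0]) ω| ∂μ)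
          - ∫ ω, X0 ω * (μ[fun ω' => S k ω' - S 1 ω' | F0]) ω ∂μ) / 2 := by
    intro k
    have h1 : ∫ ω, max (-(X0 ω * (μ[fun ω' => S k ω' - S 1 ω' | F0]) ω)) 0 ∂μ
        = ∫ ω, (|X0 ω * (μ[fun ω' => S k ω' - S 1 ω' | F0]) ω|
            - X0 ω * (μ[fun ω' => S k ω' - S 1 ω' | F0]) ω) / 2 ∂μ :=
      integral_congr_ae (ae_of_all _ fun ω => negpart_eq _)
    rw [h1, integral_div, integral_sub (habs_int k) (hIXψ k)]
  have hBA : ∀ k, ∫ ω, X0 ω * (μ[fun ω' => S k ω' - S 1 ω' | F0]) ω ∂μ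
      ≤ ∫ ω, |X0 ω * (μ[fun ω' => S k ω' - S 1 ω' | F0]) ω| ∂μ :=
    fun k => integral_mono (hIXψ k) (habs_int k) (fun ω => le_abs_self _)
  -- step 5 : the variance identity
  have hXX_int : ∀ a b, Integrable (fun ω => X a ω * X b ω) μ :=
    fun a b => integrable_mul_of_L2 (hX2 a) (hX2 b)
  have hcc : ∀ l i, ∫ ω, X l ω * X (l + i) ω ∂μ = ∫ ω, X0 ω * X i ω ∂μ := by
    intro l i
    have hpt : ∀ ω, X l ω * X (l + i) ω = (fun ω' => X0 ω' * X i ω') (T^[l] ω) := by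
      intro ω
      simp only [hXf]
      rw [← Function.iterate_add_apply T i l ω, add_comm i l]
    rw [integral_congr_ae (ae_of_all _ fun ω => hpt ω)]
    exact integral_comp_iterate hT ((hX0sm.mul (hXsm i)).aestronglyMeasurable) l
  have hc0 : ∀ m, ∫ ω, (X m ω) ^ 2 ∂μ = ∫ ω, (X0 ω) ^ 2 ∂μ := by
    intro m
    have hpt : ∀ ω, (X m ω) ^ 2 = (fun ω' => (X0 ω') ^ 2) (T^[m] ω) := fun ω => by
      simp only [hXf]
    rw [integral_congr_ae (ae_of_all _ fun ω => hpt ω)]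
    exact integral_comp_iterate hT
      ((hX0sm.measurable.pow_const 2).stronglyMeasurable.aestronglyMeasurable) m
  have hcross : ∀ m, ∫ ω, S m ω * X m ω ∂μ
      = ∫ ω, X0 ω * (S (m + 1) ω - S 1 ω) ∂μ := by
    intro m
    have hSX : ∫ ω, S m ω * X m ω ∂μ
        = ∑ l ∈ Finset.range m, ∫ ω, X l ω * X m ω ∂μ := by
      have h1 : ∫ ω, S m ω * X m ω ∂μ
          = ∫ ω, (∑ l ∈ Finset.range m, X l ω * X m ω) ∂μ :=
        integral_congr_ae (ae_of_all _ fun ω => by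
          show S m ω * X m ω = ∑ l ∈ Finset.range m, X l ω * X m ω
          simp only [hS m]
          rw [Finset.sum_mul])
      rw [h1, integral_finset_sum _ (fun l _ => hXX_int l m)]
    rw [hSX]
    have h2 : ∀ l ∈ Finset.range m,
        ∫ ω, X l ω * X m ω ∂μ = ∫ ω, X0 ω * X (m - l) ω ∂μ := by
      intro l hl
      have hlm : l + (m - l) = m := by
        have := Finset.mem_range.mp hl; omega
      conv_lhs => rw [← hlm]
      exact hcc l (m - l)
    rw [Finset.sum_congr rfl h2]
    have h3 : ∫ ω, X0 ω * (S (m + 1) ω - S 1 ω) ∂μ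
        = ∑ l ∈ Finset.Icc 1 m, ∫ ω, X0 ω * X l ω ∂μ := by
      have h4 : ∫ ω, X0 ω * (S (m + 1) ω - S 1 ω) ∂μ
          = ∫ ω, (∑ l ∈ Finset.Icc 1 m, X0 ω * X l ω) ∂μ :=
        integral_congr_ae (ae_of_all _ fun ω => by
          show X0 ω * (S (m + 1) ω - S 1 ω) = ∑ l ∈ Finset.Icc 1 m, X0 ω * X l ω
          have h5 : S (m + 1) ω - S 1 ω = ∑ l ∈ Finset.Icc 1 m, X l ω := by
            simp only [hS (m + 1), hS 1]
            rw [← Finset.Ico_add_one_right_eq_Icc, Finset.sum_Ico_eq_sub _ (by omega : 1 ≤ m + 1)]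
          rw [h5, Finset.mul_sum])
      rw [h4, integral_finset_sum _ (fun l _ => integrable_mul_of_L2 hX0L2 (hX2 l))]
    rw [h3]
    exact sum_range_sub_eq_sum_Icc (fun i => ∫ ω, X0 ω * X i ω ∂μ) m
  have hvar : ∀ m, ∫ ω, (S m ω) ^ 2 ∂μ
      = m * ∫ ω, (X0 ω) ^ 2 ∂μ
        + 2 * ∑ k ∈ Finset.Icc 1 m, ∫ ω, X0 ω * (S k ω - S 1 ω) ∂μ := by
    intro m
    induction m with
    | zero =>
        have h0 : ∫ ω, (S 0 ω) ^ 2 ∂μ = 0 := by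
          rw [show (fun ω => (S 0 ω) ^ 2) = (fun _ : Ω => (0 : ℝ)) from
            funext (fun ω => by rw [hS0 ω]; norm_num)]
          simp
        rw [h0]
        simp
    | succ m ih =>
        have h1 : ∫ ω, (S (m + 1) ω) ^ 2 ∂μ
            = ∫ ω, (S m ω) ^ 2 ∂μ
              + (2 * ∫ ω, S m ω * X m ω ∂μ + ∫ ω, (X m ω) ^ 2 ∂μ) := by
          have he : ∫ ω, (S (m + 1) ω) ^ 2 ∂μ
              = ∫ ω, ((S m ω) ^ 2 + (2 * (S m ω * X m ω) + (X m ω) ^ 2)) ∂μ :=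
            integral_congr_ae (ae_of_all _ fun ω => by
              show (S (m + 1) ω) ^ 2 = (S m ω) ^ 2 + (2 * (S m ω * X m ω) + (X m ω) ^ 2)
              rw [hSsucc m ω]; ring)
          have hi2 : Integrable (fun ω => 2 * (S m ω * X m ω)) μ := by
            exact (integrable_mul_of_L2 (hS2 m) (hX2 m)).const_mul 2
          have hi1 : Integrable (fun ω => 2 * (S m ω * X m ω) + (X m ω) ^ 2) μ := by
            exact hi2.add ((hX2 m).integrable_sq)
          rw [he, integral_add ((hS2 m).integrable_sq) hi1,
            integral_add hi2 ((hX2 m).integrable_sq), integral_const_mul]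
        rw [h1, ih, hcross m, hc0 m, Finset.sum_Icc_succ_top (by omega : 1 ≤ m + 1)]
        push_cast
        ring
  -- step 6 : final assembly
  have hIpq_sum : ∑ j ∈ Finset.range n,
      ((- ∫ ω, Dp j ω * (S n ω - S (j + 1) ω) ∂μ)
        - ∫ ω, Dq j ω * (S (j + 1) ω - S n ω) ∂μ)
      = (- ∑ j ∈ Finset.range n, ∫ ω, Dp j ω * (S n ω - S (j + 1) ω) ∂μ)
        - ∑ j ∈ Finset.range n, ∫ ω, Dq j ω * (S (j + 1) ω - S n ω) ∂μ := by
    rw [Finset.sum_sub_distrib, Finset.sum_neg_distrib]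
  have hfinal1 : ∫ ω, (⨆ i ∈ Finset.Icc 1 n, (S i ω) ^ 2) ∂μ
      ≤ 8 * ∫ ω, (S n ω) ^ 2 ∂μ
        + 4 * ∑ j ∈ Finset.range n,
            ((- ∫ ω, Dp j ω * (S n ω - S (j + 1) ω) ∂μ)
              - ∫ ω, Dq j ω * (S (j + 1) ω - S n ω) ∂μ) := by
    rw [hIpq_sum]
    linarith [hstep1, hdet_p, hdet_q]
  have hfinal2 : ∑ j ∈ Finset.range n,
      ((- ∫ ω, Dp j ω * (S n ω - S (j + 1) ω) ∂μ)
        - ∫ ω, Dq j ω * (S (j + 1) ω - S n ω) ∂μ)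
      ≤ ∑ k ∈ Finset.Icc 1 n,
          ∫ ω, max (-(X0 ω * (μ[fun ω' => S k ω' - S 1 ω' | F0]) ω)) 0 ∂μ := by
    calc ∑ j ∈ Finset.range n,
        ((- ∫ ω, Dp j ω * (S n ω - S (j + 1) ω) ∂μ)
          - ∫ ω, Dq j ω * (S (j + 1) ω - S n ω) ∂μ)
        ≤ ∑ j ∈ Finset.range n,
            ∫ ω, max (-(X0 ω * (μ[fun ω' => S (n - j) ω' - S 1 ω' | F0]) ω)) 0 ∂μ :=
          Finset.sum_le_sum (fun j hj => hkey j (Finset.mem_range.mp hj))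
      _ = ∑ k ∈ Finset.Icc 1 n,
            ∫ ω, max (-(X0 ω * (μ[fun ω' => S k ω' - S 1 ω' | F0]) ω)) 0 ∂μ :=
          sum_range_sub_eq_sum_Icc
            (fun k => ∫ ω, max (-(X0 ω * (μ[fun ω' => S k ω' - S 1 ω' | F0]) ω)) 0 ∂μ) n
  have hsum_split : ∀ (f : ℕ → ℝ),
      ∑ k ∈ Finset.Icc 1 n, f k = f 1 + ∑ k ∈ Finset.Icc 2 n, f k := by
    intro f
    have h1 : Finset.Icc 1 n = insert 1 (Finset.Icc 2 n) := by
      ext x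
      simp only [Finset.mem_Icc, Finset.mem_insert]
      omega
    rw [h1, Finset.sum_insert (by simp only [Finset.mem_Icc]; omega)]
  have hdeg : (μ[fun ω' => S 1 ω' - S 1 ω' | F0]) = 0 := by
    have h1 : (fun ω' => S 1 ω' - S 1 ω') = (0 : Ω → ℝ) := by
      funext ω'; simp
    rw [h1, condExp_zero]
  have hA1 : ∫ ω, |X0 ω * (μ[fun ω' => S 1 ω' - S 1 ω' | F0]) ω| ∂μ = 0 := by
    rw [hdeg]; simp
  have hB1 : ∫ ω, X0 ω * (μ[fun ω' => S 1 ω' - S 1 ω' | F0]) ω ∂μ = 0 := by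
    rw [hdeg]; simp
  -- abbreviations as plain reals
  have hvarn := hvar n
  have hvarn' : ∫ ω, (S n ω) ^ 2 ∂μ
      = n * ∫ ω, (X0 ω) ^ 2 ∂μ
        + 2 * ∑ k ∈ Finset.Icc 1 n,
            ∫ ω, X0 ω * (μ[fun ω' => S k ω' - S 1 ω' | F0]) ω ∂μ := by
    rw [hvarn]
    congr 1
    congr 1
    exact Finset.sum_congr rfl (fun k _ => (hB k).symm)
  have hNsum : ∑ k ∈ Finset.Icc 1 n,
      ∫ ω, max (-(X0 ω * (μ[fun ω' => S k ω' - S 1 ω' | F0]) ω)) 0 ∂μ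
      = ∑ k ∈ Finset.Icc 1 n,
          (((∫ ω, |X0 ω * (μ[fun ω' => S k ω' - S 1 ω' | F0]) ω| ∂μ)
            - ∫ ω, X0 ω * (μ[fun ω' => S k ω' - S 1 ω' | F0]) ω ∂μ) / 2) :=
    Finset.sum_congr rfl (fun k _ => hnegp k)
  -- final inequality over `Icc 2 n`
  have hterm : ∑ k ∈ Finset.Icc 2 n,
      (16 * (∫ ω, X0 ω * (μ[fun ω' => S k ω' - S 1 ω' | F0]) ω ∂μ)
        + 2 * (((∫ ω, |X0 ω * (μ[fun ω' => S k ω' - S 1 ω' | F0]) ω| ∂μ)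
            - ∫ ω, X0 ω * (μ[fun ω' => S k ω' - S 1 ω' | F0]) ω ∂μ)))
      ≤ ∑ k ∈ Finset.Icc 2 n,
          16 * ∫ ω, |X0 ω * (μ[fun ω' => S k ω' - S 1 ω' | F0]) ω| ∂μ := by
    refine Finset.sum_le_sum (fun k _ => ?_)
    have := hBA k
    linarith
  have hsum_lin1 : ∑ k ∈ Finset.Icc 2 n,
      (16 * (∫ ω, X0 ω * (μ[fun ω' => S k ω' - S 1 ω' | F0]) ω ∂μ)
        + 2 * (((∫ ω, |X0 ω * (μ[fun ω' => S k ω' - S 1 ω' | F0]) ω| ∂μ)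
            - ∫ ω, X0 ω * (μ[fun ω' => S k ω' - S 1 ω' | F0]) ω ∂μ)))
      = 16 * ∑ k ∈ Finset.Icc 2 n,
            ∫ ω, X0 ω * (μ[fun ω' => S k ω' - S 1 ω' | F0]) ω ∂μ
        + 2 * ((∑ k ∈ Finset.Icc 2 n,
            ∫ ω, |X0 ω * (μ[fun ω' => S k ω' - S 1 ω' | F0]) ω| ∂μ)
          - ∑ k ∈ Finset.Icc 2 n,
            ∫ ω, X0 ω * (μ[fun ω' => S k ω' - S 1 ω' | F0]) ω ∂μ) := by
    rw [Finset.sum_add_distrib, ← Finset.mul_sum, ← Finset.mul_sum, Finset.sum_sub_distrib]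
  have hsum_lin2 : ∑ k ∈ Finset.Icc 2 n,
      16 * ∫ ω, |X0 ω * (μ[fun ω' => S k ω' - S 1 ω' | F0]) ω| ∂μ
      = 16 * ∑ k ∈ Finset.Icc 2 n,
          ∫ ω, |X0 ω * (μ[fun ω' => S k ω' - S 1 ω' | F0]) ω| ∂μ := by
    rw [← Finset.mul_sum]
  -- sum splittings
  have hsplitB := hsum_split
    (fun k => ∫ ω, X0 ω * (μ[fun ω' => S k ω' - S 1 ω' | F0]) ω ∂μ)
  have hsplitN := hsum_split
    (fun k => (((∫ ω, |X0 ω * (μ[fun ω' => S k ω' - S 1 ω' | F0]) ω| ∂μ)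
      - ∫ ω, X0 ω * (μ[fun ω' => S k ω' - S 1 ω' | F0]) ω ∂μ) / 2))
  have hsplitN2 : ∑ k ∈ Finset.Icc 2 n,
      (((∫ ω, |X0 ω * (μ[fun ω' => S k ω' - S 1 ω' | F0]) ω| ∂μ)
        - ∫ ω, X0 ω * (μ[fun ω' => S k ω' - S 1 ω' | F0]) ω ∂μ) / 2)
      = ((∑ k ∈ Finset.Icc 2 n,
          ∫ ω, |X0 ω * (μ[fun ω' => S k ω' - S 1 ω' | F0]) ω| ∂μ)
        - ∑ k ∈ Finset.Icc 2 n,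
          ∫ ω, X0 ω * (μ[fun ω' => S k ω' - S 1 ω' | F0]) ω ∂μ) / 2 := by
    rw [← Finset.sum_div, Finset.sum_sub_distrib]
  linarith [hfinal1, hfinal2, hvarn', hNsum, hterm, hsum_lin1, hsum_lin2, hsplitB, hsplitN,
    hsplitN2, hA1, hB1]
end

section
/- For a stationary adapted sequence $(X_k)$ of centered square-integrable random variables, with $2^{r-1} < n \leq 2^r$, the bound $2\|X_0\|_2 + 3\sum_{j=0}^{r-1}2^{-j/2}\|\mathbb{E}(S_{2^j}\mid\mathcal{F}_0)\|_2 \leq 2\|X_0\|_2 + 80\sum_{j=1}^n j^{-3/2}\|\mathbb{E}(S_j\mid\mathcal{F}_0)\|_2$ holds. -/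
open MeasureTheory Filter
open scoped ENNReal

section Helpers

variable {Ω : Type*} {m m0 : MeasurableSpace Ω} {μ : Measure Ω}

lemma my_condexp_ae_eq_condexpL2 [IsFiniteMeasure μ] (hm : m ≤ m0)
    {f : Ω → ℝ} (hf : MemLp f 2 μ) :
    μ[f|m] =ᵐ[μ] (condExpL2 ℝ ℝ hm (hf.toLp f) : Ω → ℝ) := by
  refine (ae_eq_condExp_of_forall_setIntegral_eq hm (hf.integrable one_le_two)
    (fun s _ hμs => integrableOn_condExpL2_of_measure_ne_top hm hμs.ne _)
    (fun s hs hμs => ?_) (aestronglyMeasurable_condExpL2 hm _)).symm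
  rw [integral_condExpL2_eq hm (hf.toLp f) hs hμs.ne]
  exact setIntegral_congr_ae (hm s hs) ((hf.coeFn_toLp).mono fun x hx _ => hx)

lemma my_memℒp2_condexp [IsFiniteMeasure μ] (hm : m ≤ m0)
    {f : Ω → ℝ} (hf : MemLp f 2 μ) : MemLp (μ[f|m]) 2 μ :=
  (Lp.memLp _).ae_eq (my_condexp_ae_eq_condexpL2 hm hf).symm

lemma my_eLpNorm_condexp_le [IsFiniteMeasure μ] (hm : m ≤ m0)
    {f : Ω → ℝ} (hf : MemLp f 2 μ) : eLpNorm (μ[f|m]) 2 μ ≤ eLpNorm f 2 μ := by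
  rw [eLpNorm_congr_ae (my_condexp_ae_eq_condexpL2 hm hf)]
  refine (eLpNorm_condExpL2_le hm _).trans ?_
  rw [eLpNorm_congr_ae hf.coeFn_toLp]

lemma my_condexp_comp [IsProbabilityMeasure μ] (hm : m ≤ m0)
    {φ : Ω → Ω} (hφm : Measurable[m0, m0] φ) (hφ : MeasurePreserving φ μ μ)
    {f : Ω → ℝ} (hfi : Integrable f μ) :
    μ[f ∘ φ | m.comap φ] =ᵐ[μ] (μ[f|m]) ∘ φ := by
  have hcle : m.comap φ ≤ m0 := fun s hs => by
    obtain ⟨t, ht, rfl⟩ := hs; exact hφm (hm t ht)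
  have hφm' : Measurable[m.comap φ, m] φ := fun t ht => ⟨t, ht, rfl⟩
  have hg : StronglyMeasurable[m] (μ[f|m]) := stronglyMeasurable_condExp
  have hgm0 : AEStronglyMeasurable (μ[f|m]) μ := (hg.mono hm).aestronglyMeasurable
  have hfcomp : Integrable (f ∘ φ) μ :=
    memLp_one_iff_integrable.mp
      ((memLp_one_iff_integrable.mpr hfi).comp_measurePreserving hφ)
  have hgcomp : Integrable ((μ[f|m]) ∘ φ) μ :=
    memLp_one_iff_integrable.mp
      ((memLp_one_iff_integrable.mpr integrable_condExp).comp_measurePreserving hφ)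
  have key : ∀ (g : Ω → ℝ), AEStronglyMeasurable g μ → ∀ t : Set Ω, MeasurableSet[m0] t →
      ∫ x in φ ⁻¹' t, g (φ x) ∂μ = ∫ y in t, g y ∂μ := by
    intro g hgm t ht
    have h := setIntegral_map (μ := μ) (g := φ) (f := g) ht
      (by rw [hφ.map_eq]; exact hgm) hφm.aemeasurable
    rw [hφ.map_eq] at h
    exact h.symm
  refine (ae_eq_condExp_of_forall_setIntegral_eq hcle hfcomp
    (fun s _ _ => hgcomp.integrableOn)
    (fun s hs hμs => ?_) ((hg.comp_measurable hφm').aestronglyMeasurable)).symm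
  obtain ⟨t, ht, rfl⟩ := hs
  simp only [Function.comp_apply]
  rw [key _ hgm0 t (hm t ht), key _ hfi.1 t (hm t ht), setIntegral_condExp hm hfi ht]

end Helpers

section Arith

lemma my_geom_bound (j0 t : ℕ) :
    ∑ j ∈ Finset.Ico j0 t, ((1 : ℝ)/2) ^ j ≤ 2 * ((1 : ℝ)/2) ^ j0 := by
  rw [Finset.sum_Ico_eq_sum_range]
  calc ∑ i ∈ Finset.range (t - j0), ((1 : ℝ)/2) ^ (j0 + i)
      = ((1 : ℝ)/2) ^ j0 * ∑ i ∈ Finset.range (t - j0), ((1 : ℝ)/2) ^ i := by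
        rw [Finset.mul_sum]; exact Finset.sum_congr rfl fun i _ => pow_add _ _ _
    _ ≤ ((1 : ℝ)/2) ^ j0 * 2 := by
        refine mul_le_mul_of_nonneg_left (sum_geometric_two_le _) (by positivity)
    _ = 2 * ((1 : ℝ)/2) ^ j0 := by ring

lemma my_coeff_bound (k r : ℕ) (hk : 1 ≤ k) :
    ∑ j ∈ Finset.Ico 1 r, (if k + 1 ≤ 2 ^ j then 4 / (2 : ℝ) ^ (3 * (j : ℝ) / 2) else 0)
      ≤ 8 / (k : ℝ) ^ ((3 : ℝ) / 2) := by
  set j0 := Nat.clog 2 (k + 1) with hj0def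
  have hcond : ∀ j : ℕ, (k + 1 ≤ 2 ^ j ↔ j0 ≤ j) := fun j => (Nat.clog_le_iff_le_pow one_lt_two).symm
  have hkr : (k : ℝ) ≤ (2 : ℝ) ^ (j0 : ℝ) := by
    have h1 : k + 1 ≤ 2 ^ j0 := (hcond j0).mpr le_rfl
    have h2 : ((k : ℝ) + 1) ≤ ((2 : ℝ) ^ j0 : ℝ) := by exact_mod_cast h1
    rw [Real.rpow_natCast]; linarith
  have hsplit : ∀ j : ℕ, (2 : ℝ) ^ (3 * (j : ℝ) / 2) = (2 : ℝ) ^ (j : ℝ) * (2 : ℝ) ^ ((j : ℝ) / 2) := by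
    intro j
    rw [← Real.rpow_add two_pos]
    congr 1; ring
  calc ∑ j ∈ Finset.Ico 1 r, (if k + 1 ≤ 2 ^ j then 4 / (2 : ℝ) ^ (3 * (j : ℝ) / 2) else 0)
      = ∑ j ∈ (Finset.Ico 1 r).filter (fun j => k + 1 ≤ 2 ^ j), 4 / (2 : ℝ) ^ (3 * (j : ℝ) / 2) :=
        (Finset.sum_filter _ _).symm
    _ ≤ ∑ j ∈ Finset.Ico j0 r, 4 / (2 : ℝ) ^ (3 * (j : ℝ) / 2) := by
        refine Finset.sum_le_sum_of_subset_of_nonneg ?_ (fun j _ _ => by positivity)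
        intro j hj
        simp only [Finset.mem_filter, Finset.mem_Ico] at hj ⊢
        exact ⟨(hcond j).mp hj.2, hj.1.2⟩
    _ ≤ ∑ j ∈ Finset.Ico j0 r, (4 / (2 : ℝ) ^ ((j0 : ℝ) / 2)) * ((1 : ℝ)/2) ^ j := by
        refine Finset.sum_le_sum fun j hj => ?_
        have hj0j : (j0 : ℝ) ≤ (j : ℝ) := by
          exact_mod_cast (Finset.mem_Ico.mp hj).1
        have hmono : (2 : ℝ) ^ ((j0 : ℝ) / 2) ≤ (2 : ℝ) ^ ((j : ℝ) / 2) :=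
          Real.rpow_le_rpow_of_exponent_le one_le_two (by linarith)
        have hpos1 : (0 : ℝ) < (2 : ℝ) ^ ((j0 : ℝ) / 2) := Real.rpow_pos_of_pos two_pos _
        have hpos2 : (0 : ℝ) < (2 : ℝ) ^ ((j : ℝ) / 2) := Real.rpow_pos_of_pos two_pos _
        have hpos3 : (0 : ℝ) < (2 : ℝ) ^ (j : ℝ) := Real.rpow_pos_of_pos two_pos _
        rw [hsplit j]
        have heq : (4 / (2 : ℝ) ^ ((j0 : ℝ) / 2)) * ((1 : ℝ)/2) ^ j
            = 4 / ((2 : ℝ) ^ (j : ℝ) * (2 : ℝ) ^ ((j0 : ℝ) / 2)) := by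
          rw [div_pow, one_pow, ← Real.rpow_natCast 2 j]
          field_simp
        rw [heq]
        apply div_le_div_of_nonneg_left (by norm_num) (by positivity)
        exact mul_le_mul_of_nonneg_left hmono hpos3.le
    _ = (4 / (2 : ℝ) ^ ((j0 : ℝ) / 2)) * ∑ j ∈ Finset.Ico j0 r, ((1 : ℝ)/2) ^ j := by
        rw [Finset.mul_sum]
    _ ≤ (4 / (2 : ℝ) ^ ((j0 : ℝ) / 2)) * (2 * ((1 : ℝ)/2) ^ j0) := by
        exact mul_le_mul_of_nonneg_left (my_geom_bound j0 r) (by positivity)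
    _ = 8 / ((2 : ℝ) ^ ((j0 : ℝ) / 2) * (2 : ℝ) ^ (j0 : ℝ)) := by
        rw [div_pow, one_pow, ← Real.rpow_natCast 2 j0]
        have hpos1 : (0 : ℝ) < (2 : ℝ) ^ ((j0 : ℝ) / 2) := Real.rpow_pos_of_pos two_pos _
        have hpos3 : (0 : ℝ) < (2 : ℝ) ^ (j0 : ℝ) := Real.rpow_pos_of_pos two_pos _
        field_simp
        ring
    _ ≤ 8 / (k : ℝ) ^ ((3 : ℝ) / 2) := by
        have hkpos : (0 : ℝ) < (k : ℝ) := by exact_mod_cast hk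
        have hnum : (k : ℝ) ^ ((3 : ℝ) / 2) ≤ (2 : ℝ) ^ ((j0 : ℝ) / 2) * (2 : ℝ) ^ (j0 : ℝ) := by
          have h1 : (k : ℝ) ^ ((3 : ℝ) / 2) ≤ ((2 : ℝ) ^ (j0 : ℝ)) ^ ((3 : ℝ) / 2) :=
            Real.rpow_le_rpow hkpos.le hkr (by norm_num)
          have h2 : ((2 : ℝ) ^ (j0 : ℝ)) ^ ((3 : ℝ) / 2) = (2 : ℝ) ^ ((j0 : ℝ) * (3 / 2)) :=
            (Real.rpow_mul (by norm_num) _ _).symm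
          have h3 : (2 : ℝ) ^ ((j0 : ℝ) * (3 / 2)) = (2 : ℝ) ^ ((j0 : ℝ) / 2) * (2 : ℝ) ^ (j0 : ℝ) := by
            rw [← Real.rpow_add two_pos]
            congr 1; ring
          linarith [h1, h2 ▸ h1]
        apply div_le_div_of_nonneg_left (by norm_num) (by positivity) hnum
    
lemma my_arith_main (a : ℕ → ℝ) (ha0 : ∀ k, 0 ≤ a k) (hsub : ∀ m k, a (m + k) ≤ a m + a k)
    (n r : ℕ) (hr1 : 2 ^ (r - 1) < n) :
    3 * ∑ j ∈ Finset.range r, a (2 ^ j) / (2 : ℝ) ^ ((j : ℝ) / 2)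
      ≤ 80 * ∑ k ∈ Finset.Icc 1 n, a k / (k : ℝ) ^ ((3 : ℝ) / 2) := by
  have hR0 : 0 ≤ ∑ k ∈ Finset.Icc 1 n, a k / (k : ℝ) ^ ((3 : ℝ) / 2) := by
    refine Finset.sum_nonneg fun k _ => div_nonneg (ha0 k) ?_
    positivity
  rcases Nat.eq_zero_or_pos r with hr0 | hrpos
  · subst hr0
    simp only [Finset.range_zero, Finset.sum_empty, mul_zero]
    linarith
  -- pairing inequality
  have hpair : ∀ N : ℕ, 1 ≤ N →
      ((N : ℝ) - 1) * a N ≤ 2 * ∑ k ∈ Finset.Icc 1 (N - 1), a k := by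
    intro N hN
    have hterm : ∀ k ∈ Finset.Icc 1 (N - 1), a N ≤ a k + a (N - k) := by
      intro k hk
      rw [Finset.mem_Icc] at hk
      have hkN : k + (N - k) = N := by omega
      calc a N = a (k + (N - k)) := by rw [hkN]
        _ ≤ a k + a (N - k) := hsub k (N - k)
    have h2 := Finset.sum_le_sum hterm
    rw [Finset.sum_const, Finset.sum_add_distrib] at h2
    have h3 : ∑ k ∈ Finset.Icc 1 (N - 1), a (N - k) = ∑ k ∈ Finset.Icc 1 (N - 1), a k := by
      refine Finset.sum_nbij' (fun k => N - k) (fun k => N - k) ?_ ?_ ?_ ?_ ?_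
      · intro x hx; simp only [Finset.mem_Icc] at hx ⊢; omega
      · intro x hx; simp only [Finset.mem_Icc] at hx ⊢; omega
      · intro x hx; simp only [Finset.mem_Icc] at hx ⊢; omega
      · intro x hx; simp only [Finset.mem_Icc] at hx ⊢; omega
      · intro x hx; rfl
    rw [h3] at h2
    have hcard : (Finset.Icc 1 (N - 1)).card = N - 1 := by
      rw [Nat.card_Icc]; omega
    rw [hcard, nsmul_eq_mul] at h2
    have hcast : ((N - 1 : ℕ) : ℝ) = (N : ℝ) - 1 := by
      rw [Nat.cast_sub hN, Nat.cast_one]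
    rw [hcast] at h2
    linarith
  -- per-dyadic-block bound, j ≥ 1
  have hstep2 : ∀ j ∈ Finset.Ico 1 r,
      a (2 ^ j) / (2 : ℝ) ^ ((j : ℝ) / 2)
        ≤ ∑ k ∈ Finset.Icc 1 (2 ^ j - 1), (4 / (2 : ℝ) ^ (3 * (j : ℝ) / 2)) * a k := by
    intro j hj
    have hj1 : 1 ≤ j := (Finset.mem_Ico.mp hj).1
    have hN1 : 1 ≤ 2 ^ j := Nat.one_le_two_pow
    have hB2 : (2 : ℝ) ≤ ((2 ^ j : ℕ) : ℝ) := by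
      have : (2 : ℕ) ^ 1 ≤ 2 ^ j := Nat.pow_le_pow_right (by norm_num) hj1
      exact_mod_cast this
    set Sig := ∑ k ∈ Finset.Icc 1 (2 ^ j - 1), a k with hSigdef
    have hSig0 : 0 ≤ Sig := Finset.sum_nonneg fun k _ => ha0 k
    have hp := hpair (2 ^ j) hN1
    have h4 : ((2 ^ j : ℕ) : ℝ) * a (2 ^ j) ≤ 4 * Sig := by
      nlinarith [ha0 (2 ^ j), mul_nonneg (sub_nonneg.mpr hB2) (ha0 (2 ^ j))]
    have hD : (0 : ℝ) < (2 : ℝ) ^ ((j : ℝ) / 2) := Real.rpow_pos_of_pos two_pos _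
    have hBpos : (0 : ℝ) < ((2 ^ j : ℕ) : ℝ) := by linarith
    have hBD : (2 : ℝ) ^ (3 * (j : ℝ) / 2) = ((2 ^ j : ℕ) : ℝ) * (2 : ℝ) ^ ((j : ℝ) / 2) := by
      have hc : ((2 ^ j : ℕ) : ℝ) = (2 : ℝ) ^ (j : ℝ) := by
        rw [Real.rpow_natCast]; push_cast; ring
      rw [hc, ← Real.rpow_add two_pos]
      congr 1; ring
    rw [← Finset.mul_sum, ← hSigdef, hBD]
    calc a (2 ^ j) / (2 : ℝ) ^ ((j : ℝ) / 2)
        = (a (2 ^ j) * ((2 ^ j : ℕ) : ℝ)) / (((2 ^ j : ℕ) : ℝ) * (2 : ℝ) ^ ((j : ℝ) / 2)) := by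
          field_simp
      _ ≤ (4 * Sig) / (((2 ^ j : ℕ) : ℝ) * (2 : ℝ) ^ ((j : ℝ) / 2)) := by
          apply div_le_div_of_nonneg_right ?_ (by positivity)
          linarith [h4]
      _ = 4 / (((2 ^ j : ℕ) : ℝ) * (2 : ℝ) ^ ((j : ℝ) / 2)) * Sig := by ring
  -- swap the double sum
  have hswap :
      ∑ j ∈ Finset.Ico 1 r, ∑ k ∈ Finset.Icc 1 (2 ^ j - 1),
          (4 / (2 : ℝ) ^ (3 * (j : ℝ) / 2)) * a k
        ≤ 8 * ∑ k ∈ Finset.Icc 1 n, a k / (k : ℝ) ^ ((3 : ℝ) / 2) := by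
    set M := 2 ^ (r - 1) - 1 with hMdef
    have hMn : M ≤ n := by omega
    have h1 : ∀ j ∈ Finset.Ico 1 r,
        ∑ k ∈ Finset.Icc 1 (2 ^ j - 1), (4 / (2 : ℝ) ^ (3 * (j : ℝ) / 2)) * a k
          = ∑ k ∈ Finset.Icc 1 M, (if k + 1 ≤ 2 ^ j then 4 / (2 : ℝ) ^ (3 * (j : ℝ) / 2) else 0) * a k := by
      intro j hj
      rw [Finset.mem_Ico] at hj
      have hN1 : 1 ≤ (2 : ℕ) ^ j := Nat.one_le_two_pow
      have h5 : 2 ^ j - 1 + 1 = 2 ^ j := Nat.sub_add_cancel hN1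
      have hsubset : Finset.Icc 1 (2 ^ j - 1) ⊆ Finset.Icc 1 M := by
        apply Finset.Icc_subset_Icc le_rfl
        have h6 : (2 : ℕ) ^ j ≤ 2 ^ (r - 1) := Nat.pow_le_pow_right (by norm_num) (by omega)
        omega
      have hzero : ∀ k ∈ Finset.Icc 1 M, k ∉ Finset.Icc 1 (2 ^ j - 1) →
          (if k + 1 ≤ 2 ^ j then 4 / (2 : ℝ) ^ (3 * (j : ℝ) / 2) else 0) * a k = 0 := by
        intro k hkM hk
        rw [Finset.mem_Icc] at hkM
        rw [Finset.mem_Icc] at hk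
        rw [if_neg (by omega), zero_mul]
      rw [← Finset.sum_subset hsubset hzero]
      refine Finset.sum_congr rfl fun k hk => ?_
      rw [Finset.mem_Icc] at hk
      rw [if_pos (by omega)]
    refine le_trans (le_of_eq ((Finset.sum_congr rfl h1).trans Finset.sum_comm)) ?_
    have h2 : ∀ k ∈ Finset.Icc 1 M,
        ∑ j ∈ Finset.Ico 1 r, (if k + 1 ≤ 2 ^ j then 4 / (2 : ℝ) ^ (3 * (j : ℝ) / 2) else 0) * a k
          ≤ (8 / (k : ℝ) ^ ((3 : ℝ) / 2)) * a k := by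
      intro k hk
      rw [Finset.mem_Icc] at hk
      rw [← Finset.sum_mul]
      exact mul_le_mul_of_nonneg_right (my_coeff_bound k r hk.1) (ha0 k)
    calc ∑ k ∈ Finset.Icc 1 M, ∑ j ∈ Finset.Ico 1 r,
            (if k + 1 ≤ 2 ^ j then 4 / (2 : ℝ) ^ (3 * (j : ℝ) / 2) else 0) * a k
        ≤ ∑ k ∈ Finset.Icc 1 M, (8 / (k : ℝ) ^ ((3 : ℝ) / 2)) * a k := Finset.sum_le_sum h2
      _ = 8 * ∑ k ∈ Finset.Icc 1 M, a k / (k : ℝ) ^ ((3 : ℝ) / 2) := by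
          rw [Finset.mul_sum]
          exact Finset.sum_congr rfl fun k _ => by ring
      _ ≤ 8 * ∑ k ∈ Finset.Icc 1 n, a k / (k : ℝ) ^ ((3 : ℝ) / 2) := by
          refine mul_le_mul_of_nonneg_left ?_ (by norm_num)
          refine Finset.sum_le_sum_of_subset_of_nonneg (Finset.Icc_subset_Icc le_rfl hMn) ?_
          intro k _ _
          exact div_nonneg (ha0 k) (by positivity)
  -- assemble
  have hsplit : ∑ j ∈ Finset.range r, a (2 ^ j) / (2 : ℝ) ^ ((j : ℝ) / 2)
      = a (2 ^ 0) / (2 : ℝ) ^ (((0 : ℕ) : ℝ) / 2)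
        + ∑ j ∈ Finset.Ico 1 r, a (2 ^ j) / (2 : ℝ) ^ ((j : ℝ) / 2) := by
    rw [Finset.range_eq_Ico, Finset.sum_eq_sum_Ico_succ_bot hrpos]
  have h00 : a (2 ^ 0) / (2 : ℝ) ^ (((0 : ℕ) : ℝ) / 2) = a 1 := by
    norm_num
  have ha1R : a 1 ≤ ∑ k ∈ Finset.Icc 1 n, a k / (k : ℝ) ^ ((3 : ℝ) / 2) := by
    have h1n : 1 ∈ Finset.Icc 1 n := by
      rw [Finset.mem_Icc]
      constructor
      · exact le_rfl
      · have : (1 : ℕ) ≤ 2 ^ (r - 1) := Nat.one_le_two_pow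
        omega
    have := Finset.single_le_sum (f := fun k => a k / (k : ℝ) ^ ((3 : ℝ) / 2))
      (fun k _ => div_nonneg (ha0 k) (by positivity)) h1n
    simpa using this
  have hrest : ∑ j ∈ Finset.Ico 1 r, a (2 ^ j) / (2 : ℝ) ^ ((j : ℝ) / 2)
      ≤ 8 * ∑ k ∈ Finset.Icc 1 n, a k / (k : ℝ) ^ ((3 : ℝ) / 2) :=
    le_trans (Finset.sum_le_sum hstep2) hswap
  rw [hsplit, h00]
  linarith

end Arith

/-- comparison between the dyadic and full sums of normalized
conditional expectations, for `2^(r-1) < n ≤ 2^r`. -/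
theorem stmt7
    {Ω : Type*} [m0 : MeasurableSpace Ω] (μ : Measure Ω) [IsProbabilityMeasure μ]
    (T : Ω → Ω) (hTmeas : Measurable T) (hT : MeasurePreserving T μ μ)
    (F0 : MeasurableSpace Ω) (hF0 : F0 ≤ m0) (hF0T : F0 ≤ F0.comap T)
    (X0 : Ω → ℝ) (hX0meas : StronglyMeasurable[F0] X0)
    (hX0L2 : MemLp X0 2 μ) (hX0cent : ∫ ω, X0 ω ∂μ = 0)
    (X : ℕ → Ω → ℝ) (hX : ∀ k, X k = X0 ∘ T^[k])
    (S : ℕ → Ω → ℝ) (hS : ∀ n, S n = fun ω => ∑ i ∈ Finset.range n, X i ω)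
    (n r : ℕ) (hr1 : 2 ^ (r - 1) < n) (hr2 : n ≤ 2 ^ r) :
    2 * (eLpNorm X0 2 μ).toReal
        + 3 * ∑ j ∈ Finset.range r,
            (eLpNorm (μ[S (2 ^ j) | F0]) 2 μ).toReal / (2 : ℝ) ^ ((j : ℝ) / 2)
      ≤ 2 * (eLpNorm X0 2 μ).toReal
        + 80 * ∑ j ∈ Finset.Icc 1 n,
            (eLpNorm (μ[S j | F0]) 2 μ).toReal / (j : ℝ) ^ ((3 : ℝ) / 2) := by
  letI _inst : MeasurableSpace Ω := m0
  have hSmem : ∀ k, MemLp (S k) 2 μ := by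
    intro k
    rw [hS k]
    refine memLp_finset_sum _ fun i _ => ?_
    rw [hX i]
    exact hX0L2.comp_measurePreserving (hT.iterate i)
  have hSint : ∀ k, Integrable (S k) μ := fun k => (hSmem k).integrable one_le_two
  have hcomapm : ∀ m : ℕ, F0.comap (T^[m]) ≤ m0 := by
    intro m s hs
    obtain ⟨t, ht, rfl⟩ := hs
    exact (hTmeas.iterate m) (hF0 t ht)
  have hF0Tm : ∀ m : ℕ, F0 ≤ F0.comap (T^[m]) := by
    intro m
    induction m with
    | zero => simp [MeasurableSpace.comap_id]
    | succ m ih =>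
        calc F0 ≤ F0.comap T := hF0T
          _ ≤ (F0.comap (T^[m])).comap T := MeasurableSpace.comap_mono ih
          _ = F0.comap (T^[m] ∘ T) := MeasurableSpace.comap_comp
          _ = F0.comap (T^[m + 1]) := by rw [← Function.iterate_succ]
  set A : ℕ → ℝ≥0∞ := fun k => eLpNorm (μ[S k|F0]) 2 μ with hAdef
  have hAfin : ∀ k, A k ≠ ⊤ := fun k => ((my_memℒp2_condexp hF0 (hSmem k)).2).ne
  have hdecomp : ∀ m k : ℕ, S (m + k) = S m + S k ∘ T^[m] := by
    intro m k
    funext ω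
    simp only [hS, hX, Pi.add_apply, Function.comp_apply]
    rw [← Finset.sum_range_add_sum_Ico _ (Nat.le_add_right m k)]
    congr 1
    rw [Finset.sum_Ico_eq_sum_range]
    simp only [Nat.add_sub_cancel_left]
    refine Finset.sum_congr rfl fun i _ => ?_
    rw [add_comm m i, Function.iterate_add_apply]
  have hkey : ∀ m k : ℕ, eLpNorm (μ[S k ∘ T^[m]|F0]) 2 μ ≤ A k := by
    intro m k
    have hcc := my_condexp_comp hF0 (hTmeas.iterate m) (hT.iterate m) (hSint k)
    have htower : μ[μ[S k ∘ T^[m]|F0.comap (T^[m])]|F0] =ᵐ[μ] μ[S k ∘ T^[m]|F0] :=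
      condExp_condExp_of_le (hF0Tm m) (hcomapm m)
    have heq : μ[S k ∘ T^[m]|F0] =ᵐ[μ] μ[(μ[S k|F0]) ∘ T^[m]|F0] :=
      htower.symm.trans (condExp_congr_ae hcc)
    calc eLpNorm (μ[S k ∘ T^[m]|F0]) 2 μ
        = eLpNorm (μ[(μ[S k|F0]) ∘ T^[m]|F0]) 2 μ := eLpNorm_congr_ae heq
      _ ≤ eLpNorm ((μ[S k|F0]) ∘ T^[m]) 2 μ :=
          my_eLpNorm_condexp_le hF0
            ((my_memℒp2_condexp hF0 (hSmem k)).comp_measurePreserving (hT.iterate m))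
      _ = A k := eLpNorm_comp_measurePreserving
            (stronglyMeasurable_condExp.mono hF0).aestronglyMeasurable (hT.iterate m)
  have hsub : ∀ m k : ℕ, A (m + k) ≤ A m + A k := by
    intro m k
    have hckm : MemLp (S k ∘ T^[m]) 2 μ := (hSmem k).comp_measurePreserving (hT.iterate m)
    have hasm : AEStronglyMeasurable (μ[S m|F0]) μ :=
      (stronglyMeasurable_condExp.mono hF0).aestronglyMeasurable
    have hasm2 : AEStronglyMeasurable (μ[S k ∘ T^[m]|F0]) μ :=
      (stronglyMeasurable_condExp.mono hF0).aestronglyMeasurable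
    calc A (m + k) = eLpNorm (μ[S m + S k ∘ T^[m]|F0]) 2 μ := by
          simp only [hAdef]; rw [hdecomp m k]
      _ = eLpNorm (μ[S m|F0] + μ[S k ∘ T^[m]|F0]) 2 μ :=
          eLpNorm_congr_ae (condExp_add (hSint m) (hckm.integrable one_le_two) F0)
      _ ≤ eLpNorm (μ[S m|F0]) 2 μ + eLpNorm (μ[S k ∘ T^[m]|F0]) 2 μ :=
          eLpNorm_add_le hasm hasm2 one_le_two
      _ ≤ A m + A k := add_le_add le_rfl (hkey m k)
  have hsubR : ∀ m k : ℕ, (A (m + k)).toReal ≤ (A m).toReal + (A k).toReal := by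
    intro m k
    have hfin : A m + A k ≠ ⊤ := by
      simp [ENNReal.add_ne_top, hAfin m, hAfin k]
    have h' := ENNReal.toReal_mono hfin (hsub m k)
    rwa [ENNReal.toReal_add (hAfin m) (hAfin k)] at h'
  have ha0 : ∀ k, 0 ≤ (A k).toReal := fun k => ENNReal.toReal_nonneg
  have := my_arith_main (fun k => (A k).toReal) ha0 hsubR n r hr1
  simp only [hAdef] at this
  linarith
end

section
/- If the stationary adapted centered $L^2$ sequence $(X_k)$ satisfies $\sum_{n=1}^\infty n^{-1/2}\|\mathbb{E}(X_n\mid\mathcal{F}_0)\|_2 < \infty$, then it satisfies the Maxwell–Woodroofe condition $\sum_{k=1}^\infty k^{-3/2}\|\mathbb{E}(S_k\mid\mathcal{F}_0)\|_2 < \infty$. -/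
open MeasureTheory Filter
open scoped ENNReal

private lemma sqrt_key (k : ℕ) :
    1 / (((k : ℝ) + 1) * Real.sqrt ((k : ℝ) + 1)) ≤
      4 / Real.sqrt ((k : ℝ) + 1) - 4 / Real.sqrt ((k : ℝ) + 2) := by
  have h1 : (0:ℝ) < (k : ℝ) + 1 := by positivity
  have h2 : (0:ℝ) < (k : ℝ) + 2 := by positivity
  set s := Real.sqrt ((k : ℝ) + 1) with hs
  set t := Real.sqrt ((k : ℝ) + 2) with ht
  have hs0 : 0 < s := Real.sqrt_pos.mpr h1
  have ht0 : 0 < t := Real.sqrt_pos.mpr h2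
  have hs2 : s ^ 2 = (k : ℝ) + 1 := Real.sq_sqrt h1.le
  have ht2 : t ^ 2 = (k : ℝ) + 2 := Real.sq_sqrt h2.le
  have hs1 : 1 ≤ s := by nlinarith [Nat.cast_nonneg (α := ℝ) k]
  have hst : s ≤ t := Real.sqrt_le_sqrt (by linarith)
  rw [div_sub_div _ _ hs0.ne' ht0.ne', div_le_div_iff₀ (by positivity) (by positivity)]
  have key : (t - s) * (t + s) = 1 := by nlinarith
  nlinarith [sq_nonneg (t - s), mul_pos hs0 ht0, mul_pos (mul_pos hs0 hs0) ht0,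
    mul_le_mul_of_nonneg_left hst hs0.le]

private lemma tele_bound (i : ℕ) : ∀ N : ℕ, i ≤ N →
    ∑ k ∈ Finset.Ico i N, 1 / (((k : ℝ) + 1) * Real.sqrt ((k : ℝ) + 1)) ≤
      4 / Real.sqrt ((i : ℝ) + 1) - 4 / Real.sqrt ((N : ℝ) + 1) := by
  refine Nat.le_induction ?_ ?_
  · simp
  · intro N hiN ih
    rw [Finset.sum_Ico_succ_top hiN]
    have := sqrt_key N
    have hcast : ((N : ℝ) + 1 + 1) = ((N : ℝ) + 2) := by ring
    push_cast
    push_cast at ih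
    rw [hcast]
    linarith

private lemma tele_bound' (i N : ℕ) :
    ∑ k ∈ Finset.Ico i N, 1 / (((k : ℝ) + 1) * Real.sqrt ((k : ℝ) + 1)) ≤
      4 / Real.sqrt ((i : ℝ) + 1) := by
  rcases le_or_gt i N with hiN | hiN
  · refine (tele_bound i N hiN).trans ?_
    have : 0 ≤ 4 / Real.sqrt ((N : ℝ) + 1) := by positivity
    linarith
  · rw [Finset.Ico_eq_empty (by omega)]
    simp
    positivity

private lemma analytic_summable (a : ℕ → ℝ) (ha : ∀ i, 0 ≤ a i)
    (h : Summable fun n : ℕ => a (n + 1) / Real.sqrt ((n : ℝ) + 1)) :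
    Summable fun k : ℕ =>
      (∑ i ∈ Finset.range (k + 1), a i) / (((k : ℝ) + 1) * Real.sqrt ((k : ℝ) + 1)) := by
  set C := ∑' n : ℕ, a (n + 1) / Real.sqrt ((n : ℝ) + 1) with hC
  have hC0 : 0 ≤ C := tsum_nonneg fun n => div_nonneg (ha _) (Real.sqrt_nonneg _)
  apply summable_of_sum_range_le (c := 4 * (a 0 + C))
  · intro k
    have : 0 ≤ ∑ i ∈ Finset.range (k + 1), a i := Finset.sum_nonneg fun i _ => ha i
    positivity
  · intro N
    calc ∑ k ∈ Finset.range N,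
          (∑ i ∈ Finset.range (k + 1), a i) / (((k : ℝ) + 1) * Real.sqrt ((k : ℝ) + 1))
        = ∑ k ∈ Finset.Ico 0 N, ∑ i ∈ Finset.Ico 0 (k + 1),
            a i / (((k : ℝ) + 1) * Real.sqrt ((k : ℝ) + 1)) := by
          simp_rw [Finset.range_eq_Ico, Finset.sum_div]
      _ = ∑ i ∈ Finset.Ico 0 N, ∑ k ∈ Finset.Ico i N,
            a i / (((k : ℝ) + 1) * Real.sqrt ((k : ℝ) + 1)) :=
          (Finset.sum_Ico_Ico_comm 0 N fun i k =>
            a i / (((k : ℝ) + 1) * Real.sqrt ((k : ℝ) + 1))).symm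
      _ ≤ ∑ i ∈ Finset.Ico 0 N, a i * (4 / Real.sqrt ((i : ℝ) + 1)) := by
          refine Finset.sum_le_sum fun i _ => ?_
          have : ∑ k ∈ Finset.Ico i N, a i / (((k : ℝ) + 1) * Real.sqrt ((k : ℝ) + 1)) =
              a i * ∑ k ∈ Finset.Ico i N, 1 / (((k : ℝ) + 1) * Real.sqrt ((k : ℝ) + 1)) := by
            rw [Finset.mul_sum]
            exact Finset.sum_congr rfl fun k _ => by ring
          rw [this]
          exact mul_le_mul_of_nonneg_left (tele_bound' i N) (ha i)
      _ = 4 * ∑ i ∈ Finset.range N, a i / Real.sqrt ((i : ℝ) + 1) := by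
          rw [← Finset.range_eq_Ico, Finset.mul_sum]
          exact Finset.sum_congr rfl fun i _ => by ring
      _ ≤ 4 * (a 0 + C) := by
          have hmono : ∑ i ∈ Finset.range N, a i / Real.sqrt ((i : ℝ) + 1) ≤
              ∑ i ∈ Finset.range (N + 1), a i / Real.sqrt ((i : ℝ) + 1) := by
            refine Finset.sum_le_sum_of_subset_of_nonneg
              (Finset.range_subset_range.mpr (Nat.le_succ N)) fun i _ _ => div_nonneg (ha _) (Real.sqrt_nonneg _)
          have hsplit : ∑ i ∈ Finset.range (N + 1), a i / Real.sqrt ((i : ℝ) + 1) =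
              (∑ i ∈ Finset.range N, a (i + 1) / Real.sqrt (((i : ℝ) + 1) + 1)) +
                a 0 / Real.sqrt ((0 : ℝ) + 1) := by
            rw [Finset.sum_range_succ']
            push_cast
            ring_nf
          have hterm : ∀ i : ℕ, a (i + 1) / Real.sqrt (((i : ℝ) + 1) + 1) ≤
              a (i + 1) / Real.sqrt ((i : ℝ) + 1) := by
            intro i
            refine div_le_div_of_nonneg_left (ha _) (Real.sqrt_pos.mpr (by positivity)) ?_
            exact Real.sqrt_le_sqrt (by linarith)
          have htail : ∑ i ∈ Finset.range N, a (i + 1) / Real.sqrt (((i : ℝ) + 1) + 1) ≤ C := by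
            refine le_trans (Finset.sum_le_sum fun i _ => hterm i) ?_
            exact Summable.sum_le_tsum _ (fun i _ => div_nonneg (ha _) (Real.sqrt_nonneg _)) h
          have ha0 : a 0 / Real.sqrt ((0 : ℝ) + 1) = a 0 := by
            norm_num
          nlinarith [ha 0]

private lemma eLpNorm_condexp_two_le {α : Type*} {m m0 : MeasurableSpace α} (hm : m ≤ m0)
    (μ : Measure α) [IsFiniteMeasure μ] {f : α → ℝ} (hf : MemLp f 2 μ) :
    eLpNorm (μ[f|m]) 2 μ ≤ eLpNorm f 2 μ := by
  have heq : μ[f|m] =ᵐ[μ] (condExpL2 ℝ ℝ hm (hf.toLp f) : α → ℝ) := by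
    refine (ae_eq_condExp_of_forall_setIntegral_eq hm (hf.integrable one_le_two)
      (fun s _ hμs => integrableOn_condExpL2_of_measure_ne_top hm hμs.ne _)
      (fun s hs hμs => ?_) (aestronglyMeasurable_condExpL2 hm _)).symm
    rw [integral_condExpL2_eq hm (hf.toLp f) hs hμs.ne]
    exact setIntegral_congr_ae (hm s hs) ((hf.coeFn_toLp).mono fun x hx _ => hx)
  rw [eLpNorm_congr_ae heq]
  refine (eLpNorm_condExpL2_le hm _).trans ?_
  rw [eLpNorm_congr_ae hf.coeFn_toLp]

/-- `∑ n^{-1/2} ‖E(X_n|F_0)‖₂ < ∞` implies the Maxwell–Woodroofe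
condition `∑ k^{-3/2} ‖E(S_k|F_0)‖₂ < ∞`. -/
theorem stmt10
    {Ω : Type*} [m0 : MeasurableSpace Ω] (μ : Measure Ω) [IsProbabilityMeasure μ]
    (T : Ω → Ω) (hTmeas : Measurable T) (hT : MeasurePreserving T μ μ)
    (F0 : MeasurableSpace Ω) (hF0 : F0 ≤ m0) (hF0T : F0 ≤ F0.comap T)
    (X0 : Ω → ℝ) (hX0meas : StronglyMeasurable[F0] X0)
    (hX0L2 : MemLp X0 2 μ) (hX0cent : ∫ ω, X0 ω ∂μ = 0)
    (X : ℕ → Ω → ℝ) (hX : ∀ k, X k = X0 ∘ T^[k])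
    (S : ℕ → Ω → ℝ) (hS : ∀ n, S n = fun ω => ∑ i ∈ Finset.range n, X i ω)
    (h : Summable (fun n : ℕ =>
        (eLpNorm (μ[X (n + 1) | F0]) 2 μ).toReal / ((n : ℝ) + 1) ^ ((1 : ℝ) / 2))) :
    Summable (fun k : ℕ =>
        (eLpNorm (μ[S (k + 1) | F0]) 2 μ).toReal / ((k : ℝ) + 1) ^ ((3 : ℝ) / 2)) := by
  -- notation
  have hXmem : ∀ i, MemLp (X i) 2 μ := by
    intro i
    clear! F0
    rw [hX i]
    exact MemLp.comp_measurePreserving (f := T^[i]) hX0L2 (hT.iterate i)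
  set a : ℕ → ℝ := fun i => (eLpNorm (μ[X i | F0]) 2 μ).toReal with haa
  have ha : ∀ i, 0 ≤ a i := fun i => ENNReal.toReal_nonneg
  -- rewrite the rpow exponents using sqrt
  have hrpow12 : ∀ n : ℕ, ((n : ℝ) + 1) ^ ((1 : ℝ) / 2) = Real.sqrt ((n : ℝ) + 1) := by
    intro n
    rw [Real.sqrt_eq_rpow]
  have hrpow32 : ∀ k : ℕ, ((k : ℝ) + 1) ^ ((3 : ℝ) / 2) =
      ((k : ℝ) + 1) * Real.sqrt ((k : ℝ) + 1) := by
    intro k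
    have hpos : (0:ℝ) < (k : ℝ) + 1 := by positivity
    rw [Real.sqrt_eq_rpow, show (3:ℝ)/2 = 1 + 1/2 by norm_num, Real.rpow_add hpos,
      Real.rpow_one]
  have h' : Summable fun n : ℕ => a (n + 1) / Real.sqrt ((n : ℝ) + 1) := by
    refine h.congr fun n => ?_
    rw [hrpow12 n]
  -- the analytic summability result
  have hsum := analytic_summable a ha h'
  -- compare termwise
  refine Summable.of_nonneg_of_le (fun k => by positivity) (fun k => ?_) hsum
  rw [hrpow32 k]
  have hD : (0:ℝ) < ((k : ℝ) + 1) * Real.sqrt ((k : ℝ) + 1) := by positivity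
  rw [div_le_div_iff_of_pos_right hD]
  -- main estimate: ‖E(S_{k+1}|F0)‖₂ ≤ ∑_{i ≤ k} ‖E(X_i|F0)‖₂
  have hSfun : S (k + 1) = ∑ i ∈ Finset.range (k + 1), X i := by
    rw [hS]
    ext ω
    simp [Finset.sum_apply]
  have hcond : μ[S (k + 1)|F0] =ᵐ[μ] ∑ i ∈ Finset.range (k + 1), μ[X i|F0] := by
    rw [hSfun]
    exact condExp_finsetSum (fun i _ => (hXmem i).integrable one_le_two) F0
  have hbound : eLpNorm (μ[S (k + 1)|F0]) 2 μ ≤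
      ∑ i ∈ Finset.range (k + 1), eLpNorm (μ[X i|F0]) 2 μ := by
    rw [eLpNorm_congr_ae hcond]
    exact eLpNorm_sum_le
      (fun i _ => (stronglyMeasurable_condExp.mono hF0).aestronglyMeasurable) one_le_two
  have hfin : ∀ i, eLpNorm (μ[X i|F0]) 2 μ ≠ ∞ := fun i =>
    ((eLpNorm_condexp_two_le hF0 μ (hXmem i)).trans_lt (hXmem i).2).ne
  calc (eLpNorm (μ[S (k + 1)|F0]) 2 μ).toReal
      ≤ (∑ i ∈ Finset.range (k + 1), eLpNorm (μ[X i|F0]) 2 μ).toReal := by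
        refine ENNReal.toReal_mono ?_ hbound
        exact (ENNReal.sum_lt_top.mpr fun i _ => (hfin i).lt_top).ne
    _ = ∑ i ∈ Finset.range (k + 1), a i := by
        rw [ENNReal.toReal_sum (fun i _ => hfin i)]
end

section
/- Suppose a stationary adapted centered $L^2$ sequence $(X_k)$ satisfies: for every $j\geq 0$, $\Gamma_j = \sum_{k\geq j}\|X_j\,\mathbb{E}(X_k\mid\mathcal{F}_0)\|_1 < \infty$ and $\frac{1}{m}\sum_{j=0}^{m-1}\Gamma_j \to 0$ as $m\to\infty$. Then with $Y_0^m = \frac{1}{m}\mathbb{E}(X_1+\cdots+X_m\mid\mathcal{F}_0)$ and $Y_k^m = Y_0^m\circ T^k$, for any $l > m$ one has $\|Y_0^m\,\mathbb{E}(Y_{m+1}^m + \cdots + Y_l^m\mid\mathcal{F}_0)\|_1 \leq \frac{1}{m}\sum_{j=1}^m \sum_{k\geq m}\|\mathbb{E}(X_j\mid\mathcal{F}_0)\,\mathbb{E}(X_k\mid\mathcal{F}_0)\|_1$. -/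
open MeasureTheory Filter
open scoped ENNReal

section Aux

lemma aux_memL2_condexp {Ω : Type*} {F0 m0 : MeasurableSpace Ω} {μ : Measure Ω}
    [IsProbabilityMeasure μ] (hF0 : F0 ≤ m0)
    {f : Ω → ℝ} (hf : MemLp f 2 μ) : MemLp (μ[f|F0]) 2 μ := by
  have h : ((condExpL2 ℝ ℝ hF0 (hf.toLp f) : Ω →₂[μ] ℝ) : Ω → ℝ) =ᵐ[μ] μ[f|F0] := by
    refine ae_eq_condExp_of_forall_setIntegral_eq hF0 (hf.integrable one_le_two)
      (fun s _ _ => ((Lp.memLp _).integrable one_le_two).integrableOn)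
      (fun s hs hμs => ?_) (aestronglyMeasurable_condExpL2 hF0 _)
    rw [integral_condExpL2_eq hF0 (hf.toLp f) hs hμs.ne]
    exact setIntegral_congr_ae (hF0 s hs) ((MemLp.coeFn_toLp hf).mono fun x hx _ => hx)
  exact (Lp.memLp ((condExpL2 ℝ ℝ hF0 (hf.toLp f) : Ω →₂[μ] ℝ))).ae_eq h

lemma aux_comap_iterate {Ω : Type*} {T : Ω → Ω} {F0 : MeasurableSpace Ω} (hF0T : F0 ≤ F0.comap T) :
    ∀ k : ℕ, F0 ≤ F0.comap (T^[k])
  | 0 => by rw [Function.iterate_zero, MeasurableSpace.comap_id]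
  | (k+1) => by
      rw [Function.iterate_succ]
      calc F0 ≤ F0.comap T := hF0T
        _ ≤ (F0.comap (T^[k])).comap T :=
            MeasurableSpace.comap_mono (aux_comap_iterate hF0T k)
        _ = F0.comap (T^[k] ∘ T) := MeasurableSpace.comap_comp

lemma aux_condexp_comp {Ω : Type*} {F0 m0 : MeasurableSpace Ω} {μ : Measure Ω}
    [IsProbabilityMeasure μ] {T : Ω → Ω}
    (hT : MeasurePreserving T μ μ) (hF0 : F0 ≤ m0)
    (hF0T : F0 ≤ F0.comap T) {f : Ω → ℝ} (hf : Integrable f μ) (k : ℕ) :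
    μ[(μ[f|F0]) ∘ (T^[k]) | F0] =ᵐ[μ] μ[f ∘ (T^[k]) | F0] := by
  have hTk : MeasurePreserving (T^[k]) μ μ := hT.iterate k
  have hfk : Integrable (f ∘ T^[k]) μ :=
    memLp_one_iff_integrable.mp ((memLp_one_iff_integrable.mpr hf).comp_measurePreserving hTk)
  have hgk : Integrable ((μ[f|F0]) ∘ T^[k]) μ :=
    memLp_one_iff_integrable.mp
      ((memLp_one_iff_integrable.mpr integrable_condExp).comp_measurePreserving hTk)
  refine ae_eq_condExp_of_forall_setIntegral_eq hF0 hfk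
    (fun s _ _ => integrable_condExp.integrableOn) (fun s hs hμs => ?_)
    stronglyMeasurable_condExp.aestronglyMeasurable
  obtain ⟨t, htF0, rfl⟩ := aux_comap_iterate hF0T k s hs
  have hmapeq : Measure.map (T^[k]) μ = μ := hTk.map_eq
  have h2 : ∀ (F : Ω → ℝ), AEStronglyMeasurable F μ →
      ∫ x in T^[k] ⁻¹' t, F (T^[k] x) ∂μ = ∫ y in t, F y ∂μ := by
    intro F hF
    rw [← setIntegral_map (hF0 t htF0) (by rwa [hmapeq]) hTk.measurable.aemeasurable, hmapeq]
  calc ∫ x in T^[k] ⁻¹' t, (μ[(μ[f|F0]) ∘ (T^[k])|F0]) x ∂μ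
      = ∫ x in T^[k] ⁻¹' t, (μ[f|F0]) (T^[k] x) ∂μ := setIntegral_condExp hF0 hgk hs
    _ = ∫ y in t, (μ[f|F0]) y ∂μ :=
        h2 _ (stronglyMeasurable_condExp.mono hF0).aestronglyMeasurable
    _ = ∫ y in t, f y ∂μ := setIntegral_condExp hF0 hf htF0
    _ = ∫ x in T^[k] ⁻¹' t, f (T^[k] x) ∂μ := (h2 _ hf.1).symm

lemma aux_count (m l : ℕ) (f : ℕ → ℝ≥0∞) :
    ∑ k ∈ Finset.Icc (m+1) l, ∑ i ∈ Finset.Icc 1 m, f (i + k)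
      ≤ (m : ℝ≥0∞) * ∑' n : ℕ, f (m + n) := by
  classical
  have h1 : ∑ k ∈ Finset.Icc (m+1) l, ∑ i ∈ Finset.Icc 1 m, f (i + k)
      = ∑ p ∈ (Finset.Icc (m+1) l) ×ˢ (Finset.Icc 1 m), f (p.2 + p.1) := by
    rw [Finset.sum_product]
  rw [h1, Finset.sum_comp f (fun p : ℕ × ℕ => p.2 + p.1)]
  set s : Finset (ℕ × ℕ) := (Finset.Icc (m+1) l) ×ˢ (Finset.Icc 1 m) with hs
  have hA : ∀ b ∈ s.image (fun p : ℕ × ℕ => p.2 + p.1), m + 1 ≤ b := by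
    intro b hb
    rw [Finset.mem_image] at hb
    obtain ⟨p, hp, rfl⟩ := hb
    rw [hs, Finset.mem_product, Finset.mem_Icc, Finset.mem_Icc] at hp
    omega
  have hcard : ∀ b ∈ s.image (fun p : ℕ × ℕ => p.2 + p.1),
      (s.filter fun p => p.2 + p.1 = b).card ≤ m := by
    intro b _
    have h : (s.filter fun p => p.2 + p.1 = b).card ≤ (Finset.Icc 1 m).card := by
      apply Finset.card_le_card_of_injOn (fun p : ℕ × ℕ => p.2)
      · intro p hp
        rw [Finset.mem_coe, Finset.mem_filter, hs, Finset.mem_product] at hp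
        exact hp.1.2
      · intro p hp q hq hpq
        rw [Finset.mem_coe, Finset.mem_filter] at hp hq
        have h1 : p.2 + p.1 = b := hp.2
        have h2 : q.2 + q.1 = b := hq.2
        have hpq2 : p.2 = q.2 := hpq
        have : p.1 = q.1 := by omega
        exact Prod.ext this hpq2
    simpa [Nat.card_Icc] using h
  calc ∑ b ∈ s.image (fun p : ℕ × ℕ => p.2 + p.1),
        (s.filter fun p => p.2 + p.1 = b).card • f b
      ≤ ∑ b ∈ s.image (fun p : ℕ × ℕ => p.2 + p.1), (m : ℝ≥0∞) * f b := by
        refine Finset.sum_le_sum fun b hb => ?_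
        rw [nsmul_eq_mul]
        exact mul_le_mul_left (Nat.cast_le.mpr (hcard b hb)) _
    _ = (m : ℝ≥0∞) * ∑ b ∈ s.image (fun p : ℕ × ℕ => p.2 + p.1), f b := by
        rw [Finset.mul_sum]
    _ ≤ (m : ℝ≥0∞) * ∑' n : ℕ, f (m + n) := by
        refine mul_le_mul_right ?_ _
        have hinj : ∀ a ∈ s.image (fun p : ℕ × ℕ => p.2 + p.1),
            ∀ b ∈ s.image (fun p : ℕ × ℕ => p.2 + p.1), a - m = b - m → a = b := by
          intro a ha b hb h
          have := hA a ha; have := hA b hb; omega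
        have heq : ∑ n ∈ ((s.image (fun p : ℕ × ℕ => p.2 + p.1)).image (· - m)), f (m + n)
            = ∑ b ∈ s.image (fun p : ℕ × ℕ => p.2 + p.1), f (m + (b - m)) :=
          Finset.sum_image hinj
        have heq2 : ∑ b ∈ s.image (fun p : ℕ × ℕ => p.2 + p.1), f (m + (b - m))
            = ∑ b ∈ s.image (fun p : ℕ × ℕ => p.2 + p.1), f b :=
          Finset.sum_congr rfl fun b hb => by have := hA b hb; congr 1; omega
        rw [← heq2, ← heq]
        exact ENNReal.sum_le_tsum _
lemma aux_memLp_comp_iterate {Ω : Type*} {m0 : MeasurableSpace Ω} {μ : Measure Ω}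
    {T : Ω → Ω} (hT : MeasurePreserving T μ μ) {p : ℝ≥0∞} {f : Ω → ℝ}
    (hf : MemLp f p μ) (n : ℕ) : MemLp (f ∘ T^[n]) p μ :=
  hf.comp_measurePreserving (hT.iterate n)

lemma aux_integrable_comp_iterate {Ω : Type*} {m0 : MeasurableSpace Ω} {μ : Measure Ω}
    {T : Ω → Ω} (hT : MeasurePreserving T μ μ) {f : Ω → ℝ}
    (hf : Integrable f μ) (n : ℕ) : Integrable (f ∘ T^[n]) μ :=
  memLp_one_iff_integrable.mp
    ((memLp_one_iff_integrable.mpr hf).comp_measurePreserving (hT.iterate n))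
end Aux

/-- under the conditions of Proposition `underRio`, for `l > m`,
`‖Y_0^m E(Y_{m+1}^m + ⋯ + Y_l^m | F_0)‖₁ ≤ (1/m) ∑_{j=1}^m ∑_{k≥m} ‖E(X_j|F_0) E(X_k|F_0)‖₁`. -/
theorem stmt19
    {Ω : Type*} [m0 : MeasurableSpace Ω] (μ : Measure Ω) [IsProbabilityMeasure μ]
    (T : Ω → Ω) (hTmeas : Measurable T) (hT : MeasurePreserving T μ μ)
    (F0 : MeasurableSpace Ω) (hF0 : F0 ≤ m0) (hF0T : F0 ≤ F0.comap T)
    (X0 : Ω → ℝ) (hX0meas : StronglyMeasurable[F0] X0)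
    (hX0L2 : MemLp X0 2 μ) (hX0cent : ∫ ω, X0 ω ∂μ = 0)
    (X : ℕ → Ω → ℝ) (hX : ∀ k, X k = X0 ∘ T^[k])
    (hΓfin : ∀ j : ℕ, Summable (fun k : ℕ => ∫ ω, |X j ω * (μ[X (j + k) | F0]) ω| ∂μ))
    (hΓ0 : Tendsto (fun m : ℕ =>
        (1 / m : ℝ) * ∑ j ∈ Finset.range m,
          ∑' k : ℕ, ∫ ω, |X j ω * (μ[X (j + k) | F0]) ω| ∂μ) atTop (nhds 0))
    (m : ℕ) (hm : 1 ≤ m)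
    (Y : ℕ → Ω → ℝ)
    (hY0 : Y 0 = fun ω =>
        (1 / m : ℝ) * (μ[fun ω' => ∑ i ∈ Finset.Icc 1 m, X i ω' | F0]) ω)
    (hY : ∀ k, Y k = Y 0 ∘ T^[k])
    (l : ℕ) (hl : m < l) :
    ENNReal.ofReal
        (∫ ω, |Y 0 ω * (μ[fun ω' => ∑ k ∈ Finset.Icc (m + 1) l, Y k ω' | F0]) ω| ∂μ)
      ≤ ((m : ℝ≥0∞))⁻¹ * ∑ j ∈ Finset.Icc 1 m, ∑' k : ℕ,
          ENNReal.ofReal (∫ ω, |(μ[X j | F0]) ω * (μ[X (m + k) | F0]) ω| ∂μ) := by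
  classical
  have hm0 : (0 : ℝ) < m := by exact_mod_cast Nat.pos_of_ne_zero (by omega)
  have hc : (0 : ℝ) ≤ 1 / m := by positivity
  have hXL2 : ∀ n, MemLp (X n) 2 μ := fun n => by
    rw [hX n]; exact aux_memLp_comp_iterate hT hX0L2 n
  have hXint : ∀ n, Integrable (X n) μ := fun n => (hXL2 n).integrable one_le_two
  have hGL2 : ∀ n, MemLp (μ[X n|F0]) 2 μ := fun n => aux_memL2_condexp hF0 (hXL2 n)
  have hpqr : (1 : ℝ≥0∞) / 1 = 1 / 2 + 1 / 2 := by rw [ENNReal.add_halves]; simp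
  have hGmul : ∀ j n : ℕ,
      Integrable (fun ω => (μ[X j|F0]) ω * (μ[X n|F0]) ω) μ := fun j n => by
    have h := (hGL2 n).smul (hGL2 j) (r := 1)
    have heq : ((μ[X j|F0]) • (μ[X n|F0]))
        = fun ω => (μ[X j|F0]) ω * (μ[X n|F0]) ω := rfl
    rw [heq] at h
    exact memLp_one_iff_integrable.mp h
  have hSL2 : MemLp (fun ω' => ∑ i ∈ Finset.Icc 1 m, X i ω') 2 μ :=
    memLp_finsetSum _ fun i _ => hXL2 i
  have hSint : Integrable (fun ω' => ∑ i ∈ Finset.Icc 1 m, X i ω') μ :=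
    hSL2.integrable one_le_two
  have hY0int : Integrable (Y 0) μ := by
    rw [hY0]; exact integrable_condExp.const_mul _
  have hYint : ∀ k, Integrable (Y k) μ := fun k => by
    rw [hY k]
    exact aux_integrable_comp_iterate hT hY0int k
  -- composition identity
  have hcomp : ∀ k : ℕ, (fun ω' => ∑ i ∈ Finset.Icc 1 m, X i ω') ∘ T^[k]
      = fun ω => ∑ i ∈ Finset.Icc 1 m, X (i + k) ω := by
    intro k; funext ω
    simp only [Function.comp_apply]
    refine Finset.sum_congr rfl fun i _ => ?_
    rw [hX i, hX (i + k)]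
    simp [Function.iterate_add_apply]
  -- conditional expectation of Y k
  have hYk : ∀ k : ℕ, μ[Y k|F0]
      =ᵐ[μ] fun ω => (1 / m : ℝ) * ∑ i ∈ Finset.Icc 1 m, (μ[X (i + k)|F0]) ω := by
    intro k
    have h1 : Y k = (1 / m : ℝ) •
        ((μ[fun ω' => ∑ i ∈ Finset.Icc 1 m, X i ω'|F0]) ∘ T^[k]) := by
      rw [hY k, hY0]; rfl
    rw [h1]
    refine (condExp_smul ((1 : ℝ) / m) _ F0).trans ?_
    have h2 := aux_condexp_comp hT hF0 hF0T hSint k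
    have h3 : μ[((fun ω' => ∑ i ∈ Finset.Icc 1 m, X i ω') ∘ T^[k])|F0]
        =ᵐ[μ] fun ω => ∑ i ∈ Finset.Icc 1 m, (μ[X (i + k)|F0]) ω := by
      rw [hcomp k]
      have h4 : (fun ω => ∑ i ∈ Finset.Icc 1 m, X (i + k) ω)
          = ∑ i ∈ Finset.Icc 1 m, X (i + k) := by funext ω; simp
      rw [h4]
      refine (condExp_finsetSum (fun i _ => hXint (i + k)) F0).trans ?_
      refine Filter.EventuallyEq.of_eq ?_
      funext ω; simp
    have h5 := h2.trans h3
    filter_upwards [h5] with ω hω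
    simp only [Pi.smul_apply, smul_eq_mul, hω]
  -- conditional expectation of the sum
  have hEsum : μ[fun ω' => ∑ k ∈ Finset.Icc (m + 1) l, Y k ω'|F0]
      =ᵐ[μ] fun ω => (1 / m : ℝ) *
        ∑ k ∈ Finset.Icc (m + 1) l, ∑ i ∈ Finset.Icc 1 m, (μ[X (i + k)|F0]) ω := by
    have h1 : (fun ω' => ∑ k ∈ Finset.Icc (m + 1) l, Y k ω')
        = ∑ k ∈ Finset.Icc (m + 1) l, Y k := by funext ω; simp
    rw [h1]
    refine (condExp_finsetSum (fun k _ => hYint k) F0).trans ?_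
    refine (eventuallyEq_sum fun k _ => hYk k).trans ?_
    refine Filter.EventuallyEq.of_eq ?_
    funext ω
    simp [Finset.mul_sum]
  -- A and B and the main estimate
  have hAeq : μ[fun ω' => ∑ i ∈ Finset.Icc 1 m, X i ω'|F0]
      =ᵐ[μ] fun ω => ∑ j ∈ Finset.Icc 1 m, (μ[X j|F0]) ω := by
    have h1 : (fun ω' => ∑ i ∈ Finset.Icc 1 m, X i ω')
        = ∑ i ∈ Finset.Icc 1 m, X i := by funext ω; simp
    rw [h1]
    refine (condExp_finsetSum (fun i _ => hXint i) F0).trans ?_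
    refine Filter.EventuallyEq.of_eq ?_
    funext ω; simp
  set A : Ω → ℝ := fun ω => ∑ j ∈ Finset.Icc 1 m, (μ[X j|F0]) ω with hA
  set B : Ω → ℝ := fun ω =>
    ∑ k ∈ Finset.Icc (m + 1) l, ∑ i ∈ Finset.Icc 1 m, (μ[X (i + k)|F0]) ω with hB
  have hAL2 : MemLp A 2 μ := memLp_finsetSum _ fun j _ => hGL2 j
  have hBL2 : MemLp B 2 μ :=
    memLp_finsetSum _ fun k _ => memLp_finsetSum _ fun i _ => hGL2 (i + k)
  have hABint : Integrable (fun ω => A ω * B ω) μ := by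
    have h := hBL2.smul hAL2 (r := 1)
    exact memLp_one_iff_integrable.mp h
  -- pointwise bound
  have hptw : ∀ ω, |A ω * B ω| ≤ ∑ j ∈ Finset.Icc 1 m,
      ∑ p ∈ (Finset.Icc (m + 1) l) ×ˢ (Finset.Icc 1 m),
        |(μ[X j|F0]) ω * (μ[X (p.2 + p.1)|F0]) ω| := by
    intro ω
    have hBω : B ω = ∑ p ∈ (Finset.Icc (m + 1) l) ×ˢ (Finset.Icc 1 m),
        (μ[X (p.2 + p.1)|F0]) ω := by
      exact (Finset.sum_product (Finset.Icc (m + 1) l) (Finset.Icc 1 m)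
        (fun p => (μ[X (p.2 + p.1)|F0]) ω)).symm
    have h1 : A ω * B ω = ∑ j ∈ Finset.Icc 1 m,
        ∑ p ∈ (Finset.Icc (m + 1) l) ×ˢ (Finset.Icc 1 m),
          (μ[X j|F0]) ω * (μ[X (p.2 + p.1)|F0]) ω := by
      rw [hBω, hA]
      rw [Finset.sum_mul_sum]
    rw [h1]
    refine (Finset.abs_sum_le_sum_abs _ _).trans ?_
    exact Finset.sum_le_sum fun j _ => Finset.abs_sum_le_sum_abs _ _
  have hbound_int : Integrable (fun ω => ∑ j ∈ Finset.Icc 1 m,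
      ∑ p ∈ (Finset.Icc (m + 1) l) ×ˢ (Finset.Icc 1 m),
        |(μ[X j|F0]) ω * (μ[X (p.2 + p.1)|F0]) ω|) μ :=
    integrable_finset_sum _ fun j _ =>
      integrable_finset_sum _ fun p _ => (hGmul j (p.2 + p.1)).abs
  have hint1 : ∫ ω, |A ω * B ω| ∂μ ≤ ∑ j ∈ Finset.Icc 1 m,
      ∑ p ∈ (Finset.Icc (m + 1) l) ×ˢ (Finset.Icc 1 m),
        ∫ ω, |(μ[X j|F0]) ω * (μ[X (p.2 + p.1)|F0]) ω| ∂μ := by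
    have h := integral_mono hABint.abs hbound_int hptw
    calc ∫ ω, |A ω * B ω| ∂μ ≤ _ := h
      _ = _ := by
        rw [integral_finset_sum _ (fun j _ =>
          integrable_finset_sum _ fun p _ => (hGmul j (p.2 + p.1)).abs)]
        exact Finset.sum_congr rfl fun j _ =>
          integral_finset_sum _ fun p _ => (hGmul j (p.2 + p.1)).abs
  -- LHS integral identity
  have hLHS : ∫ ω, |Y 0 ω * (μ[fun ω' => ∑ k ∈ Finset.Icc (m + 1) l, Y k ω'|F0]) ω| ∂μ
      = ((1 / m : ℝ) * (1 / m)) * ∫ ω, |A ω * B ω| ∂μ := by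
    rw [← integral_const_mul]
    refine integral_congr_ae ?_
    filter_upwards [hAeq, hEsum] with ω h1 h2
    rw [hY0]
    simp only
    rw [h1, h2]
    rw [show (1 / m : ℝ) * A ω * ((1 / m : ℝ) * B ω)
        = ((1 / m : ℝ) * (1 / m)) * (A ω * B ω) by ring, abs_mul,
      abs_of_nonneg (by positivity : (0:ℝ) ≤ (1 / m : ℝ) * (1 / m))]
  -- pass to ENNReal
  have hD : ∀ (j : ℕ) (p : ℕ × ℕ),
      0 ≤ ∫ ω, |(μ[X j|F0]) ω * (μ[X (p.2 + p.1)|F0]) ω| ∂μ := fun j p =>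
    integral_nonneg fun ω => abs_nonneg _
  have hcENN : ENNReal.ofReal ((1 / m : ℝ) * (1 / m))
      = ((m : ℝ≥0∞))⁻¹ * ((m : ℝ≥0∞))⁻¹ := by
    rw [ENNReal.ofReal_mul hc, one_div, ENNReal.ofReal_inv_of_pos hm0,
      ENNReal.ofReal_natCast]
  have hmne : ((m : ℝ≥0∞)) ≠ 0 := by exact_mod_cast Nat.cast_ne_zero.mpr (by omega)
  have hinv : ((m : ℝ≥0∞))⁻¹ * (m : ℝ≥0∞) = 1 :=
    ENNReal.inv_mul_cancel hmne (ENNReal.natCast_ne_top m)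
  calc ENNReal.ofReal
        (∫ ω, |Y 0 ω * (μ[fun ω' => ∑ k ∈ Finset.Icc (m + 1) l, Y k ω'|F0]) ω| ∂μ)
      = ENNReal.ofReal (((1 / m : ℝ) * (1 / m)) * ∫ ω, |A ω * B ω| ∂μ) := by rw [hLHS]
    _ ≤ ENNReal.ofReal (((1 / m : ℝ) * (1 / m)) * ∑ j ∈ Finset.Icc 1 m,
          ∑ p ∈ (Finset.Icc (m + 1) l) ×ˢ (Finset.Icc 1 m),
            ∫ ω, |(μ[X j|F0]) ω * (μ[X (p.2 + p.1)|F0]) ω| ∂μ) :=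
        ENNReal.ofReal_le_ofReal
          (mul_le_mul_of_nonneg_left hint1 (by positivity))
    _ = (((m : ℝ≥0∞))⁻¹ * ((m : ℝ≥0∞))⁻¹) * ∑ j ∈ Finset.Icc 1 m,
          ∑ p ∈ (Finset.Icc (m + 1) l) ×ˢ (Finset.Icc 1 m),
            ENNReal.ofReal (∫ ω, |(μ[X j|F0]) ω * (μ[X (p.2 + p.1)|F0]) ω| ∂μ) := by
        rw [ENNReal.ofReal_mul (by positivity), hcENN]
        congr 1
        rw [ENNReal.ofReal_sum_of_nonneg fun j _ => Finset.sum_nonneg fun p _ => hD j p]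
        exact Finset.sum_congr rfl fun j _ =>
          ENNReal.ofReal_sum_of_nonneg fun p _ => hD j p
    _ ≤ (((m : ℝ≥0∞))⁻¹ * ((m : ℝ≥0∞))⁻¹) * ((m : ℝ≥0∞) * ∑ j ∈ Finset.Icc 1 m,
          ∑' k : ℕ, ENNReal.ofReal
            (∫ ω, |(μ[X j|F0]) ω * (μ[X (m + k)|F0]) ω| ∂μ)) := by
        refine mul_le_mul_right ?_ _
        rw [Finset.mul_sum]
        refine Finset.sum_le_sum fun j _ => ?_
        have h := aux_count m l
          (fun n => ENNReal.ofReal (∫ ω, |(μ[X j|F0]) ω * (μ[X n|F0]) ω| ∂μ))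
        calc ∑ p ∈ (Finset.Icc (m + 1) l) ×ˢ (Finset.Icc 1 m),
              ENNReal.ofReal (∫ ω, |(μ[X j|F0]) ω * (μ[X (p.2 + p.1)|F0]) ω| ∂μ)
            = ∑ k ∈ Finset.Icc (m + 1) l, ∑ i ∈ Finset.Icc 1 m,
              ENNReal.ofReal (∫ ω, |(μ[X j|F0]) ω * (μ[X (i + k)|F0]) ω| ∂μ) :=
              Finset.sum_product (Finset.Icc (m + 1) l) (Finset.Icc 1 m)
                (fun p => ENNReal.ofReal
                  (∫ ω, |(μ[X j|F0]) ω * (μ[X (p.2 + p.1)|F0]) ω| ∂μ))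
          _ ≤ _ := h
    _ = ((m : ℝ≥0∞))⁻¹ * ∑ j ∈ Finset.Icc 1 m, ∑' k : ℕ,
          ENNReal.ofReal (∫ ω, |(μ[X j|F0]) ω * (μ[X (m + k)|F0]) ω| ∂μ) := by
        rw [mul_comm ((m : ℝ≥0∞))⁻¹ ((m : ℝ≥0∞))⁻¹, mul_assoc,
          ← mul_assoc ((m : ℝ≥0∞))⁻¹ (m : ℝ≥0∞), hinv, one_mul]
end
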